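/- arXiv:1507.03635 — 9 statements merged into one kernel-verified Lean document; each statement's English description precedes it below -/
import Mathlib

section
/- Let M be a smooth manifold and let 𝓕 be a sheaf of local vector fields on M having the unique continuation property. If 𝔤⁽¹⁾ and 𝔤⁽²⁾ are transports of 𝓕-germs along a continuous path γ : [a,b] → M such that 𝔤⁽¹⁾_{t*} = 𝔤⁽²⁾_{t*} for some t* ∈ [a,b], then 𝔤⁽¹⁾_t = 𝔤⁽²⁾_t for all t ∈ [a,b]. -/
open Set Manifold Topology

noncomputable section

variable {E : Type*} [NormedAddCommGroup E] [NormedSpace ℝ E]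
  {H : Type*} [TopologicalSpace H]

/-- A (raw) vector field on the manifold `M`, given by a choice of tangent vector at every
point.  A *local* vector field defined on an open set `U ⊆ M` is represented by such a global
assignment, where only the values on `U` are relevant. -/
abbrev VF (I : ModelWithCorners ℝ E H) (M : Type*) [TopologicalSpace M] [ChartedSpace H M] :
    Type _ :=
  (x : M) → TangentSpace I x

variable (I : ModelWithCorners ℝ E H) (M : Type*) [TopologicalSpace M] [ChartedSpace H M]
  [IsManifold I ((⊤ : ℕ∞) : WithTop ℕ∞) M]

/-- Smoothness (`C^∞`) of a vector field on a subset `U` of `M`, as smoothness of the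
corresponding section of the tangent bundle. -/
def IsSmoothVFOn (X : VF I M) (U : Set M) : Prop :=
  ContMDiffOn I I.tangent (⊤ : ℕ∞) (fun x => (⟨x, X x⟩ : TangentBundle I M)) U

/-- A sheaf of local vector fields on the manifold `M`: to every connected open set `U ⊆ M` it
assigns a linear subspace `carrier U` of the smooth vector fields on `U` (represented by global
assignments of tangent vectors, two of which describe the same local field on `U` iff they agree
on `U`), closed under restriction to connected open subsets and satisfying the gluing axiom. -/
structure VFSheaf where
  carrier : Set M → Set (VF I M)
  smooth_mem : ∀ U, IsOpen U → IsConnected U → ∀ X ∈ carrier U, IsSmoothVFOn I M X U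
  zero_mem : ∀ U, IsOpen U → IsConnected U → (0 : VF I M) ∈ carrier U
  add_mem : ∀ U, IsOpen U → IsConnected U → ∀ X ∈ carrier U, ∀ Y ∈ carrier U, X + Y ∈ carrier U
  smul_mem : ∀ U, IsOpen U → IsConnected U → ∀ (c : ℝ), ∀ X ∈ carrier U, c • X ∈ carrier U
  congr_mem : ∀ U, IsOpen U → IsConnected U → ∀ X ∈ carrier U, ∀ Y : VF I M,
    (∀ x ∈ U, Y x = X x) → Y ∈ carrier U
  restrict_mem : ∀ U, IsOpen U → IsConnected U → ∀ V, IsOpen V → IsConnected V → V ⊆ U →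
    ∀ X ∈ carrier U, X ∈ carrier V
  glue_mem : ∀ U, IsOpen U → IsConnected U → ∀ S : Set (Set M),
    (∀ V ∈ S, IsOpen V ∧ IsConnected V) → U = ⋃₀ S → ∀ X : VF I M, IsSmoothVFOn I M X U →
    (∀ V ∈ S, X ∈ carrier V) → X ∈ carrier U

variable {I M}

/-- The unique continuation property for a sheaf of local vector fields: a field of the sheaf
on a connected open set vanishing on some non-empty open subset vanishes identically. -/
def VFSheaf.UniqueContinuation (F : VFSheaf I M) : Prop :=
  ∀ U, IsOpen U → IsConnected U → ∀ X ∈ F.carrier U,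
    (∃ V : Set M, V.Nonempty ∧ IsOpen V ∧ V ⊆ U ∧ ∀ x ∈ V, X x = 0) → ∀ x ∈ U, X x = 0

variable (I M) in
/-- Restriction of global tangent-vector assignments to a subset `U`, as a linear map. -/
def resVF (U : Set M) : VF I M →ₗ[ℝ] ((x : U) → TangentSpace I (x : M)) where
  toFun X := fun x => X x
  map_add' _ _ := rfl
  map_smul' _ _ := rfl

/-- The dimension (as a cardinal) of the space `𝓕(U)` of local fields of the sheaf `F` on `U`,
computed as the rank of the space of restrictions to `U` of members of `F.carrier U`. -/
def fdim (F : VFSheaf I M) (U : Set M) : Cardinal :=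
  Module.rank ℝ ↥(Submodule.span ℝ (resVF I M U '' F.carrier U))

/-- A sheaf of local vector fields has bounded rank if the dimensions of the spaces `𝓕(U)`,
`U` connected open, are uniformly bounded. -/
def VFSheaf.BoundedRank (F : VFSheaf I M) : Prop :=
  ∃ N : ℕ, ∀ U : Set M, IsOpen U → IsConnected U → fdim F U ≤ (N : Cardinal)

/-- A sheaf of local vector fields is admissible if it has the unique continuation property
and bounded rank. -/
def VFSheaf.Admissible (F : VFSheaf I M) : Prop :=
  F.UniqueContinuation ∧ F.BoundedRank

/-- `κ^𝓕_p`: the supremum (= maximum) of `dim 𝓕(U)` over connected open neighbourhoods `U`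
of `p`. -/
def kappa (F : VFSheaf I M) (p : M) : Cardinal :=
  ⨆ U : {U : Set M // IsOpen U ∧ IsConnected U ∧ p ∈ U}, fdim F (U : Set M)

/-- A sheaf of local vector fields is regular if `p ↦ κ^𝓕_p` is constant on `M`. -/
def VFSheaf.Regular (F : VFSheaf I M) : Prop :=
  ∀ p q : M, kappa F p = kappa F q

section Germs

variable (I M) in
/-- The subspace of tangent-vector assignments vanishing on some connected open neighbourhood
of `p`; the quotient by this subspace is the space of germs at `p`. -/
def germNull [LocallyConnectedSpace M] (p : M) : Submodule ℝ (VF I M) where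
  carrier := {X | ∃ V : Set M, IsOpen V ∧ IsConnected V ∧ p ∈ V ∧ ∀ x ∈ V, X x = 0}
  zero_mem' :=
    ⟨connectedComponentIn univ p, isOpen_univ.connectedComponentIn,
      isConnected_connectedComponentIn_iff.mpr (mem_univ p),
      mem_connectedComponentIn (mem_univ p), fun _ _ => rfl⟩
  add_mem' := by
    rintro X Y ⟨V₁, hV₁o, hV₁c, hpV₁, hX⟩ ⟨V₂, hV₂o, hV₂c, hpV₂, hY⟩
    refine ⟨connectedComponentIn (V₁ ∩ V₂) p, (hV₁o.inter hV₂o).connectedComponentIn,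
      isConnected_connectedComponentIn_iff.mpr ⟨hpV₁, hpV₂⟩,
      mem_connectedComponentIn ⟨hpV₁, hpV₂⟩, fun x hx => ?_⟩
    have hx' := connectedComponentIn_subset (V₁ ∩ V₂) p hx
    show X x + Y x = 0
    rw [hX x hx'.1, hY x hx'.2, add_zero]
  smul_mem' := by
    rintro c X ⟨V, hVo, hVc, hpV, hX⟩
    exact ⟨V, hVo, hVc, hpV, fun x hx => by show c • X x = 0; rw [hX x hx, smul_zero]⟩

variable (I M) in
/-- The space of germs at `p` of (arbitrary) local vector fields on `M`. -/
abbrev GermSpace [LocallyConnectedSpace M] (p : M) : Type _ :=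
  VF I M ⧸ germNull I M p

variable (I M) in
/-- The germ at `p` of a local vector field, as a linear map. -/
def germAt [LocallyConnectedSpace M] (p : M) : VF I M →ₗ[ℝ] GermSpace I M p :=
  (germNull I M p).mkQ

/-- `𝔊^𝓕_p`: the space of germs at `p` of local `𝓕`-fields of the sheaf `F`, i.e. germs at `p`
of fields `K ∈ 𝓕(U)` with `U` a connected open neighbourhood of `p`. -/
def stalk [LocallyConnectedSpace M] (F : VFSheaf I M) (p : M) :
    Submodule ℝ (GermSpace I M p) :=
  Submodule.span ℝ {g | ∃ U : Set M, ∃ X : VF I M,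
    IsOpen U ∧ IsConnected U ∧ p ∈ U ∧ X ∈ F.carrier U ∧ g = germAt I M p X}

/-- A connected open set `U ∋ p` is `𝓕`-special for `p` if the (linear) germ map
`𝓕(U) → 𝔊^𝓕_p` is a linear isomorphism, i.e. it is injective (fields in `𝓕(U)` with the same
germ at `p` agree on `U`) and surjective onto the space of `𝓕`-germs at `p`. -/
def IsSpecial [LocallyConnectedSpace M] (F : VFSheaf I M) (U : Set M) (p : M) : Prop :=
  IsOpen U ∧ IsConnected U ∧ p ∈ U ∧
    (∀ K₁ ∈ F.carrier U, ∀ K₂ ∈ F.carrier U,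
      germAt I M p K₁ = germAt I M p K₂ → ∀ x ∈ U, K₁ x = K₂ x) ∧
    (∀ g ∈ stalk F p, ∃ K ∈ F.carrier U, germAt I M p K = g)

/-- A transport of `𝓕`-germs along the curve `γ : [a,b] → M`: a family of germs
`g t ∈ 𝔊^𝓕_{γ t}` which is locally induced by a single local field of the sheaf `F`. -/
def IsTransport [LocallyConnectedSpace M] (F : VFSheaf I M) (a b : ℝ) (γ : ℝ → M)
    (g : (t : ℝ) → GermSpace I M (γ t)) : Prop :=
  ∀ t₀ ∈ Icc a b, ∃ ε > (0 : ℝ), ∃ U : Set M, ∃ K : VF I M,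
    IsOpen U ∧ IsConnected U ∧ K ∈ F.carrier U ∧
    ∀ t ∈ Ioo (t₀ - ε) (t₀ + ε) ∩ Icc a b, γ t ∈ U ∧ g t = germAt I M (γ t) K

end Germs

/-- Transports of `𝓕`-germs along a continuous path which agree at one
instant agree everywhere (for a sheaf with the unique continuation property). -/
theorem statement1 [LocallyConnectedSpace M] (F : VFSheaf I M)
    (hUC : F.UniqueContinuation) (a b : ℝ) (hab : a ≤ b) (γ : ℝ → M)
    (hγ : ContinuousOn γ (Icc a b))
    (g₁ g₂ : (t : ℝ) → GermSpace I M (γ t))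
    (h₁ : IsTransport F a b γ g₁) (h₂ : IsTransport F a b γ g₂)
    (tstar : ℝ) (htstar : tstar ∈ Icc a b) (heq : g₁ tstar = g₂ tstar) :
    ∀ t ∈ Icc a b, g₁ t = g₂ t := by
  -- Key local rigidity lemma: near any `t₀`, if the germs agree at one instant of a small
  -- interval, they agree on the whole interval.
  have key : ∀ t₀ ∈ Icc a b, ∃ ε > (0 : ℝ),
      ∀ t ∈ Ioo (t₀ - ε) (t₀ + ε) ∩ Icc a b, g₁ t = g₂ t →
      ∀ u ∈ Ioo (t₀ - ε) (t₀ + ε) ∩ Icc a b, g₁ u = g₂ u := by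
    intro t₀ ht₀
    obtain ⟨ε₁, hε₁, U₁, K₁, hU₁o, hU₁c, hK₁, hg₁⟩ := h₁ t₀ ht₀
    obtain ⟨ε₂, hε₂, U₂, K₂, hU₂o, hU₂c, hK₂, hg₂⟩ := h₂ t₀ ht₀
    refine ⟨min ε₁ ε₂, lt_min hε₁ hε₂, ?_⟩
    set ε := min ε₁ ε₂ with hε
    have hsub₁ : Ioo (t₀ - ε) (t₀ + ε) ∩ Icc a b ⊆ Ioo (t₀ - ε₁) (t₀ + ε₁) ∩ Icc a b :=
      inter_subset_inter_left _ (Ioo_subset_Ioo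
        (by linarith [min_le_left ε₁ ε₂]) (by linarith [min_le_left ε₁ ε₂]))
    have hsub₂ : Ioo (t₀ - ε) (t₀ + ε) ∩ Icc a b ⊆ Ioo (t₀ - ε₂) (t₀ + ε₂) ∩ Icc a b :=
      inter_subset_inter_left _ (Ioo_subset_Ioo
        (by linarith [min_le_right ε₁ ε₂]) (by linarith [min_le_right ε₁ ε₂]))
    intro t ht hteq u hu
    have ht1 := hg₁ t (hsub₁ ht)
    have ht2 := hg₂ t (hsub₂ ht)
    have hu1 := hg₁ u (hsub₁ hu)
    have hu2 := hg₂ u (hsub₂ hu)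
    -- `K₁ - K₂` vanishes on a connected open neighbourhood `V` of `γ t`.
    have hmem : K₁ - K₂ ∈ germNull I M (γ t) := by
      rw [ht1.2, ht2.2] at hteq
      simpa using (Submodule.Quotient.eq (germNull I M (γ t))).mp hteq
    obtain ⟨V, hVo, hVc, hγtV, hV0⟩ := hmem
    have hγtU : γ t ∈ U₁ ∩ U₂ := ⟨ht1.1, ht2.1⟩
    set W := connectedComponentIn (U₁ ∩ U₂) (γ t) with hWdef
    have hWo : IsOpen W := (hU₁o.inter hU₂o).connectedComponentIn
    have hWc : IsConnected W := isConnected_connectedComponentIn_iff.mpr hγtU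
    have hWsub : W ⊆ U₁ ∩ U₂ := connectedComponentIn_subset _ _
    have hK₁W : K₁ ∈ F.carrier W :=
      F.restrict_mem U₁ hU₁o hU₁c W hWo hWc (hWsub.trans inter_subset_left) K₁ hK₁
    have hK₂W : K₂ ∈ F.carrier W :=
      F.restrict_mem U₂ hU₂o hU₂c W hWo hWc (hWsub.trans inter_subset_right) K₂ hK₂
    have hDW : (K₁ + (-1 : ℝ) • K₂) ∈ F.carrier W :=
      F.add_mem W hWo hWc K₁ hK₁W _ (F.smul_mem W hWo hWc (-1) K₂ hK₂W)
    -- By unique continuation, `K₁ - K₂` vanishes on all of `W`.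
    have hD0 : ∀ x ∈ W, (K₁ + (-1 : ℝ) • K₂) x = 0 := by
      apply hUC W hWo hWc _ hDW
      refine ⟨V ∩ W, ⟨γ t, hγtV, mem_connectedComponentIn hγtU⟩, hVo.inter hWo,
        inter_subset_right, fun x hx => ?_⟩
      have h0 : K₁ x - K₂ x = 0 := hV0 x hx.1
      show K₁ x + (-1 : ℝ) • K₂ x = 0
      rw [neg_one_smul, ← sub_eq_add_neg]
      exact h0
    -- `γ` maps the whole small interval into `W`.
    have hJpre : IsPreconnected (Ioo (t₀ - ε) (t₀ + ε) ∩ Icc a b) :=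
      (Set.ordConnected_Ioo.inter Set.ordConnected_Icc).isPreconnected
    have himg : γ '' (Ioo (t₀ - ε) (t₀ + ε) ∩ Icc a b) ⊆ W := by
      apply (hJpre.image γ (hγ.mono inter_subset_right)).subset_connectedComponentIn
        ⟨t, ht, rfl⟩
      rintro _ ⟨v, hv, rfl⟩
      exact ⟨(hg₁ v (hsub₁ hv)).1, (hg₂ v (hsub₂ hv)).1⟩
    have hγuW : γ u ∈ W := himg ⟨u, hu, rfl⟩
    rw [hu1.2, hu2.2]
    show (germNull I M (γ u)).mkQ K₁ = (germNull I M (γ u)).mkQ K₂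
    rw [Submodule.mkQ_apply, Submodule.mkQ_apply]
    refine (Submodule.Quotient.eq _).mpr ⟨W, hWo, hWc, hγuW, fun x hx => ?_⟩
    have h0 := hD0 x hx
    rw [Pi.add_apply, Pi.smul_apply, neg_one_smul, ← sub_eq_add_neg] at h0
    exact h0
  -- Global argument: the agreement set is clopen in the preconnected space `Icc a b`.
  haveI : PreconnectedSpace (Icc a b) := Subtype.preconnectedSpace isPreconnected_Icc
  set s : Set (Icc a b) := {t | g₁ ↑t = g₂ ↑t} with hs
  have hclopen : IsClopen s := by
    constructor
    · rw [← isOpen_compl_iff, isOpen_iff_mem_nhds]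
      intro x hx
      obtain ⟨ε, hε, hkey⟩ := key ↑x x.2
      rw [nhds_subtype_eq_comap, Filter.mem_comap]
      refine ⟨Ioo (↑x - ε) (↑x + ε), Ioo_mem_nhds (by linarith) (by linarith), ?_⟩
      intro y hy hy'
      exact hx (hkey ↑y ⟨hy, y.2⟩ hy' ↑x ⟨⟨by linarith, by linarith⟩, x.2⟩)
    · rw [isOpen_iff_mem_nhds]
      intro x hx
      obtain ⟨ε, hε, hkey⟩ := key ↑x x.2
      rw [nhds_subtype_eq_comap, Filter.mem_comap]
      refine ⟨Ioo (↑x - ε) (↑x + ε), Ioo_mem_nhds (by linarith) (by linarith), ?_⟩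
      intro y hy
      exact hkey ↑x ⟨⟨by linarith, by linarith⟩, x.2⟩ hx ↑y ⟨hy, y.2⟩
  have huniv : s = univ := hclopen.eq_univ ⟨⟨tstar, htstar⟩, heq⟩
  intro t ht
  have : (⟨t, ht⟩ : Icc a b) ∈ s := huniv ▸ mem_univ _
  exact this
end
end

section
/- Let M be a smooth manifold and let 𝓕 be a sheaf of local vector fields on M having the unique continuation property. Let γ : [0,1] × [a,b] → M be a continuous map with γ(s,a) = p and γ(s,b) = q for all s ∈ [0,1], where p, q ∈ M are fixed points, and set γ_s := γ(s,·) : [a,b] → M. Fix 𝔤_a ∈ 𝔊^𝓕_p and assume that for every s ∈ [0,1] there exists a transport 𝔤^(s) of 𝓕-germs along γ_s with 𝔤^(s)_a = 𝔤_a. Then the germ 𝔤^(s)_b ∈ 𝔊^𝓕_q does not depend on s. -/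
open Set Manifold Topology

noncomputable section

variable {E : Type*} [NormedAddCommGroup E] [NormedSpace ℝ E]
  {H : Type*} [TopologicalSpace H]

variable (I : ModelWithCorners ℝ E H) (M : Type*) [TopologicalSpace M] [ChartedSpace H M]
  [IsManifold I (⊤ : ℕ∞) M]

variable {I M}

section Helpers

variable [LocallyConnectedSpace M] {F : VFSheaf I M}

theorem preconn_prop {S : Set ℝ} (hS : IsPreconnected S) (P : ℝ → Prop)
    (hloc : ∀ x ∈ S, ∃ ε > (0:ℝ), ∀ y ∈ Metric.ball x ε ∩ S, ∀ z ∈ Metric.ball x ε ∩ S,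
      P y → P z)
    {x : ℝ} (hx : x ∈ S) (hPx : P x) : ∀ y ∈ S, P y := by
  intro y hy
  by_contra hPy
  set U : Set ℝ := {w | ∃ c ∈ S, ∃ ε > (0:ℝ), w ∈ Metric.ball c ε ∧
    ∀ z ∈ Metric.ball c ε ∩ S, P z} with hU
  set V : Set ℝ := {w | ∃ c ∈ S, ∃ ε > (0:ℝ), w ∈ Metric.ball c ε ∧
    ∀ z ∈ Metric.ball c ε ∩ S, ¬ P z} with hV
  have hUo : IsOpen U := by
    rw [isOpen_iff_mem_nhds]
    rintro w ⟨c, hc, ε, hε, hw, hall⟩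
    exact Filter.mem_of_superset (Metric.isOpen_ball.mem_nhds hw)
      (fun w' hw' => ⟨c, hc, ε, hε, hw', hall⟩)
  have hVo : IsOpen V := by
    rw [isOpen_iff_mem_nhds]
    rintro w ⟨c, hc, ε, hε, hw, hall⟩
    exact Filter.mem_of_superset (Metric.isOpen_ball.mem_nhds hw)
      (fun w' hw' => ⟨c, hc, ε, hε, hw', hall⟩)
  have hcover : S ⊆ U ∪ V := by
    intro c hc
    obtain ⟨ε, hε, hprop⟩ := hloc c hc
    by_cases h : ∃ z ∈ Metric.ball c ε ∩ S, P z
    · obtain ⟨z, hz, hPz⟩ := h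
      exact Or.inl ⟨c, hc, ε, hε, Metric.mem_ball_self hε, fun w hw => hprop z hz w hw hPz⟩
    · push_neg at h
      exact Or.inr ⟨c, hc, ε, hε, Metric.mem_ball_self hε, h⟩
  have hxU : x ∈ S ∩ U := by
    refine ⟨hx, ?_⟩
    rcases hcover hx with h | h
    · exact h
    · obtain ⟨c, hc, ε, hε, hw, hall⟩ := h
      exact absurd hPx (hall x ⟨hw, hx⟩)
  have hyV : y ∈ S ∩ V := by
    refine ⟨hy, ?_⟩
    rcases hcover hy with h | h
    · obtain ⟨c, hc, ε, hε, hw, hall⟩ := h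
      exact absurd (hall y ⟨hw, hy⟩) hPy
    · exact h
  obtain ⟨w, hwS, hwU, hwV⟩ := hS U V hUo hVo hcover ⟨x, hxU⟩ ⟨y, hyV⟩
  obtain ⟨c, hc, ε, hε, hw, hall⟩ := hwU
  obtain ⟨c', hc', ε', hε', hw', hall'⟩ := hwV
  exact hall' w ⟨hw', hwS⟩ (hall w ⟨hw, hwS⟩)

theorem mem_germNull_iff {x : M} {X : VF I M} :
    X ∈ germNull I M x ↔ ∃ V : Set M, IsOpen V ∧ IsConnected V ∧ x ∈ V ∧ ∀ y ∈ V, X y = 0 :=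
  Iff.rfl

theorem germAt_eq_iff {x : M} {K₁ K₂ : VF I M} :
    germAt I M x K₁ = germAt I M x K₂ ↔ K₁ - K₂ ∈ germNull I M x := by
  show (germNull I M x).mkQ K₁ = (germNull I M x).mkQ K₂ ↔ _
  rw [Submodule.mkQ_apply, Submodule.mkQ_apply]
  exact Submodule.Quotient.eq _

theorem cast_germAt {x y : M} (h : x = y) (K : VF I M) :
    cast (congrArg (GermSpace I M) h) (germAt I M x K) = germAt I M y K := by
  subst h; rfl

/-- key unique-continuation step: two sheaf fields on a connected open set with equal germ at
one point have equal germs everywhere on the set. -/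
theorem germ_eq_on (hUC : F.UniqueContinuation) {A : Set M} (hAo : IsOpen A)
    (hAc : IsConnected A) {K₁ K₂ : VF I M} (h₁ : K₁ ∈ F.carrier A) (h₂ : K₂ ∈ F.carrier A)
    {x : M} (hx : x ∈ A) (h : germAt I M x K₁ = germAt I M x K₂) :
    ∀ y ∈ A, germAt I M y K₁ = germAt I M y K₂ := by
  have hsub : K₁ - K₂ ∈ F.carrier A := by
    have h2' := F.smul_mem A hAo hAc (-1) K₂ h₂
    have h3 := F.add_mem A hAo hAc K₁ h₁ _ h2'
    refine F.congr_mem A hAo hAc _ h3 (K₁ - K₂) (fun z _ => ?_)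
    show K₁ z - K₂ z = K₁ z + ((-1 : ℝ) • K₂) z
    show K₁ z - K₂ z = K₁ z + (-1 : ℝ) • (K₂ z)
    rw [neg_one_smul, sub_eq_add_neg]
  obtain ⟨V, hVo, hVc, hxV, hV0⟩ := mem_germNull_iff.mp (germAt_eq_iff.mp h)
  have hzero : ∀ y ∈ A, (K₁ - K₂) y = 0 :=
    hUC A hAo hAc _ hsub
      ⟨V ∩ A, ⟨x, hxV, hx⟩, hVo.inter hAo, inter_subset_right, fun z hz => hV0 z hz.1⟩
  intro y hy
  exact germAt_eq_iff.mpr (mem_germNull_iff.mpr ⟨A, hAo, hAc, hy, hzero⟩)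


/-- Propagation along a single curve: if a sheaf field `K` on a connected open set `W`
containing the image of the curve on `uIcc u v` induces the transported germ at time `u`,
it induces it at time `v` as well. -/
theorem transport_propagate (hUC : F.UniqueContinuation) {a b : ℝ}
    {c : ℝ → M} (hc : ContinuousOn c (Icc a b))
    {g' : (t : ℝ) → GermSpace I M (c t)} (htr' : IsTransport F a b c g')
    {W : Set M} (hWo : IsOpen W) (hWc : IsConnected W) {K : VF I M} (hK : K ∈ F.carrier W)
    {u v : ℝ} (hu : u ∈ Icc a b) (hv : v ∈ Icc a b)
    (hcW : ∀ θ ∈ uIcc u v, c θ ∈ W)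
    (h0 : germAt I M (c u) K = g' u) : germAt I M (c v) K = g' v := by
  have hab' : a ≤ b := hu.1.trans hu.2
  have hJsub : uIcc u v ⊆ Icc a b := by
    rw [← uIcc_of_le hab']
    exact uIcc_subset_uIcc (by rwa [uIcc_of_le hab']) (by rwa [uIcc_of_le hab'])
  refine preconn_prop isPreconnected_uIcc (fun θ => germAt I M (c θ) K = g' θ) ?_
    left_mem_uIcc h0 v right_mem_uIcc
  intro θ₀ hθ₀
  obtain ⟨ε, hε, U', K', hU'o, hU'c, hK', hloc⟩ := htr' θ₀ (hJsub hθ₀)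
  have hself : c θ₀ ∈ U' ∧ g' θ₀ = germAt I M (c θ₀) K' :=
    hloc θ₀ ⟨⟨by linarith, by linarith⟩, hJsub hθ₀⟩
  have hΩo : IsOpen (W ∩ U') := hWo.inter hU'o
  have hx₀ : c θ₀ ∈ W ∩ U' := ⟨hcW θ₀ hθ₀, hself.1⟩
  set A := connectedComponentIn (W ∩ U') (c θ₀) with hA
  have hAo : IsOpen A := hΩo.connectedComponentIn
  have hAc : IsConnected A := isConnected_connectedComponentIn_iff.mpr hx₀
  have hAW : A ⊆ W := (connectedComponentIn_subset _ _).trans inter_subset_left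
  have hAU : A ⊆ U' := (connectedComponentIn_subset _ _).trans inter_subset_right
  have hKA : K ∈ F.carrier A := F.restrict_mem W hWo hWc A hAo hAc hAW K hK
  have hK'A : K' ∈ F.carrier A := F.restrict_mem U' hU'o hU'c A hAo hAc hAU K' hK'
  refine ⟨ε, hε, ?_⟩
  have key : ∀ θ ∈ Metric.ball θ₀ ε ∩ uIcc u v, c θ ∈ A ∧ g' θ = germAt I M (c θ) K' := by
    rintro θ ⟨hθb, hθJ⟩
    have hd : |θ - θ₀| < ε := by rwa [Metric.mem_ball, Real.dist_eq] at hθb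
    have hsub2 : uIcc θ θ₀ ⊆ uIcc u v := uIcc_subset_uIcc hθJ hθ₀
    have hmemIoo : ∀ ψ ∈ uIcc θ θ₀, ψ ∈ Ioo (θ₀ - ε) (θ₀ + ε) := by
      intro ψ hψ
      rw [abs_sub_lt_iff] at hd
      rcases mem_uIcc.mp hψ with ⟨h1, h2⟩ | ⟨h1, h2⟩ <;> constructor <;> linarith
    have himg : c '' uIcc θ θ₀ ⊆ W ∩ U' := by
      rintro _ ⟨ψ, hψ, rfl⟩
      exact ⟨hcW ψ (hsub2 hψ), (hloc ψ ⟨hmemIoo ψ hψ, hJsub (hsub2 hψ)⟩).1⟩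
    have hconn : IsPreconnected (c '' uIcc θ θ₀) :=
      isPreconnected_uIcc.image c (hc.mono (fun ψ hψ => hJsub (hsub2 hψ)))
    have hsubA : c '' uIcc θ θ₀ ⊆ A :=
      hconn.subset_connectedComponentIn ⟨θ₀, right_mem_uIcc, rfl⟩ himg
    exact ⟨hsubA ⟨θ, left_mem_uIcc, rfl⟩,
      (hloc θ ⟨hmemIoo θ left_mem_uIcc, hJsub hθJ⟩).2⟩
  intro y hy z hz hPy
  obtain ⟨hyA, hyg⟩ := key y hy
  obtain ⟨hzA, hzg⟩ := key z hz
  have heq : germAt I M (c y) K = germAt I M (c y) K' := by rw [hPy, hyg]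
  have hall := germ_eq_on hUC hAo hAc hKA hK'A hyA heq
  show germAt I M (c z) K = g' z
  rw [hall (c z) hzA, ← hzg]


theorem abs_uIcc_lt {c x σ r : ℝ} (h : |x - c| < r) (hσ : σ ∈ uIcc c x) : |σ - c| < r := by
  rw [abs_sub_lt_iff] at *
  rcases mem_uIcc.mp hσ with ⟨h1, h2⟩ | ⟨h1, h2⟩ <;> constructor <;> linarith

end Helpers

/-- Homotopy invariance of transport of germs: given a continuous
fixed-endpoints homotopy `γ : [0,1] × [a,b] → M` from `p` to `q` and transports `g s` of a
fixed germ `ga ∈ 𝔊^𝓕_p` along each `γ s = γ(s, ·)`, the final germ `g s b ∈ 𝔊^𝓕_q` does not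
depend on `s`. -/
theorem statement2 [LocallyConnectedSpace M] (F : VFSheaf I M)
    (hUC : F.UniqueContinuation) (a b : ℝ) (hab : a ≤ b) (p q : M)
    (γ : ℝ × ℝ → M) (hγ : ContinuousOn γ (Icc (0:ℝ) 1 ×ˢ Icc a b))
    (hpa : ∀ s ∈ Icc (0:ℝ) 1, γ (s, a) = p) (hqb : ∀ s ∈ Icc (0:ℝ) 1, γ (s, b) = q)
    (ga : GermSpace I M p)
    (g : (s : ℝ) → (t : ℝ) → GermSpace I M (γ (s, t)))
    (htr : ∀ s ∈ Icc (0:ℝ) 1, IsTransport F a b (fun t => γ (s, t)) (g s))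
    (hin : ∀ s, ∀ hs : s ∈ Icc (0:ℝ) 1,
      cast (congrArg (GermSpace I M) (hpa s hs)) (g s a) = ga) :
    ∀ s₁, ∀ hs₁ : s₁ ∈ Icc (0:ℝ) 1, ∀ s₂, ∀ hs₂ : s₂ ∈ Icc (0:ℝ) 1,
      cast (congrArg (GermSpace I M) (hqb s₁ hs₁)) (g s₁ b) =
        cast (congrArg (GermSpace I M) (hqb s₂ hs₂)) (g s₂ b) := by
  classical
  intro s₁ hs₁ s₂ hs₂
  have hslice : ∀ s' ∈ Icc (0:ℝ) 1, ContinuousOn (fun t => γ (s', t)) (Icc a b) := by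
    intro s' hs'
    exact hγ.comp ((continuous_const.prodMk continuous_id).continuousOn)
      (fun t ht => ⟨hs', ht⟩)
  -- Local constancy of the final germ, uniformly realized by a single sheaf field
  have LC : ∀ s₀ ∈ Icc (0:ℝ) 1, ∃ δ > (0:ℝ), ∃ W : Set M, ∃ K : VF I M,
      IsOpen W ∧ IsConnected W ∧ K ∈ F.carrier W ∧
      ∀ s' ∈ Metric.ball s₀ δ ∩ Icc (0:ℝ) 1,
        γ (s', b) ∈ W ∧ germAt I M (γ (s', b)) K = g s' b := by
    intro s₀ hs₀
    set P : ℝ → Prop := fun τ => ∃ δ > (0:ℝ), ∃ W : Set M, ∃ K : VF I M,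
      IsOpen W ∧ IsConnected W ∧ K ∈ F.carrier W ∧
      ∀ s' ∈ Metric.ball s₀ δ ∩ Icc (0:ℝ) 1,
        γ (s', τ) ∈ W ∧ germAt I M (γ (s', τ)) K = g s' τ with hPdef
    have hPa : P a := by
      obtain ⟨ε, hε, U, K, hUo, hUc, hK, hloc⟩ := htr s₀ hs₀ a ⟨le_refl a, hab⟩
      have h0 := hloc a ⟨⟨by linarith, by linarith⟩, ⟨le_refl a, hab⟩⟩
      have h0U : γ (s₀, a) ∈ U := h0.1
      have h0g : g s₀ a = germAt I M (γ (s₀, a)) K := h0.2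
      refine ⟨1, one_pos, U, K, hUo, hUc, hK, ?_⟩
      rintro s' ⟨_, hs'⟩
      have e' : γ (s', a) = p := hpa s' hs'
      have e₀ : γ (s₀, a) = p := hpa s₀ hs₀
      constructor
      · rw [e']; rw [e₀] at h0U; exact h0U
      · have c1 : cast (congrArg (GermSpace I M) e₀) (g s₀ a) = ga := hin s₀ hs₀
        have c2 : cast (congrArg (GermSpace I M) e') (g s' a) = ga := hin s' hs'
        have c3 : germAt I M p K = ga := by
          rw [← cast_germAt e₀ K, ← h0g, c1]
        have c4 : cast (congrArg (GermSpace I M) e') (germAt I M (γ (s', a)) K)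
            = cast (congrArg (GermSpace I M) e') (g s' a) := by
          rw [cast_germAt e' K, c3, c2]
        exact (cast_inj _).mp c4
    have hAON : ∀ τ₀ ∈ Icc a b, ∃ ε > (0:ℝ), ∀ y ∈ Metric.ball τ₀ ε ∩ Icc a b,
        ∀ z ∈ Metric.ball τ₀ ε ∩ Icc a b, P y → P z := by
      intro τ₀ hτ₀
      obtain ⟨ε₀, hε₀, U₀, K₀, hU₀o, hU₀c, hK₀, hloc₀⟩ := htr s₀ hs₀ τ₀ hτ₀
      have hx₀U : γ (s₀, τ₀) ∈ U₀ := (hloc₀ τ₀ ⟨⟨by linarith, by linarith⟩, hτ₀⟩).1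
      have hcont : ContinuousWithinAt γ (Icc (0:ℝ) 1 ×ˢ Icc a b) (s₀, τ₀) :=
        hγ (s₀, τ₀) ⟨hs₀, hτ₀⟩
      have hnhd : γ ⁻¹' U₀ ∈ nhdsWithin (s₀, τ₀) (Icc (0:ℝ) 1 ×ˢ Icc a b) :=
        hcont (hU₀o.mem_nhds hx₀U)
      obtain ⟨ρ, hρ, hball⟩ := Metric.mem_nhdsWithin_iff.mp hnhd
      refine ⟨min ε₀ ρ, lt_min hε₀ hρ, ?_⟩
      intro y hy z hz hPy
      obtain ⟨δy, hδy, Wy, Ky, hWyo, hWyc, hKy, hy'⟩ := hPy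
      set W : Set M := connectedComponentIn U₀ (γ (s₀, τ₀)) with hW
      have hWo : IsOpen W := hU₀o.connectedComponentIn
      have hWc : IsConnected W := isConnected_connectedComponentIn_iff.mpr hx₀U
      have hKW : K₀ ∈ F.carrier W :=
        F.restrict_mem U₀ hU₀o hU₀c W hWo hWc (connectedComponentIn_subset _ _) K₀ hK₀
      set δ : ℝ := min δy ρ with hδdef
      have hδ : 0 < δ := lt_min hδy hρ
      -- Step A: nearby points of the square are mapped into W
      have stepA : ∀ s' ∈ Metric.ball s₀ δ ∩ Icc (0:ℝ) 1,
          ∀ θ ∈ Metric.ball τ₀ (min ε₀ ρ) ∩ Icc a b, γ (s', θ) ∈ W := by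
        rintro s' ⟨hs'b, hs'I⟩ θ ⟨hθb, hθab⟩
        have hs'd : |s' - s₀| < δ := by rwa [Metric.mem_ball, Real.dist_eq] at hs'b
        have hθd : |θ - τ₀| < min ε₀ ρ := by rwa [Metric.mem_ball, Real.dist_eq] at hθb
        have hsubI : uIcc s₀ s' ⊆ Icc (0:ℝ) 1 := by
          rw [← uIcc_of_le (zero_le_one' ℝ)]
          exact uIcc_subset_uIcc (by rwa [uIcc_of_le (zero_le_one' ℝ)])
            (by rwa [uIcc_of_le (zero_le_one' ℝ)])
        have hsubT : uIcc τ₀ θ ⊆ Icc a b := by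
          rw [← uIcc_of_le hab]
          exact uIcc_subset_uIcc (by rwa [uIcc_of_le hab]) (by rwa [uIcc_of_le hab])
        have hrect : γ '' (uIcc s₀ s' ×ˢ uIcc τ₀ θ) ⊆ U₀ := by
          rintro _ ⟨⟨σ, ψ⟩, ⟨hσ, hψ⟩, rfl⟩
          apply hball
          refine ⟨?_, hsubI hσ, hsubT hψ⟩
          rw [Metric.mem_ball, Prod.dist_eq]
          apply max_lt
          · rw [Real.dist_eq]
            exact lt_of_lt_of_le (abs_uIcc_lt hs'd hσ) (min_le_right _ _)
          · rw [Real.dist_eq]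
            exact lt_of_lt_of_le (abs_uIcc_lt hθd hψ) (min_le_right _ _)
        have hconn : IsPreconnected (γ '' (uIcc s₀ s' ×ˢ uIcc τ₀ θ)) :=
          (isPreconnected_uIcc.prod isPreconnected_uIcc).image γ
            (hγ.mono (fun w hw => ⟨hsubI hw.1, hsubT hw.2⟩))
        have hsubW : γ '' (uIcc s₀ s' ×ˢ uIcc τ₀ θ) ⊆ W :=
          hconn.subset_connectedComponentIn
            ⟨(s₀, τ₀), ⟨left_mem_uIcc, left_mem_uIcc⟩, rfl⟩ hrect
        exact hsubW ⟨(s', θ), ⟨right_mem_uIcc, right_mem_uIcc⟩, rfl⟩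
      obtain ⟨hyball, hyab⟩ := hy
      obtain ⟨hzball, hzab⟩ := hz
      have hyb : |y - τ₀| < min ε₀ ρ := by rwa [Metric.mem_ball, Real.dist_eq] at hyball
      have hzb : |z - τ₀| < min ε₀ ρ := by rwa [Metric.mem_ball, Real.dist_eq] at hzball
      refine ⟨δ, hδ, W, K₀, hWo, hWc, hKW, ?_⟩
      rintro s' ⟨hs'b, hs'I⟩
      have hs'δy : s' ∈ Metric.ball s₀ δy ∩ Icc (0:ℝ) 1 :=
        ⟨Metric.ball_subset_ball (min_le_left _ _) hs'b, hs'I⟩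
      have hyIoo : y ∈ Ioo (τ₀ - ε₀) (τ₀ + ε₀) := by
        rw [abs_sub_lt_iff] at hyb
        have h1 : min ε₀ ρ ≤ ε₀ := min_le_left _ _
        constructor <;> [linarith [hyb.2]; linarith [hyb.1]]
      have h1 : g s₀ y = germAt I M (γ (s₀, y)) K₀ := (hloc₀ y ⟨hyIoo, hyab⟩).2
      have hs₀ball : s₀ ∈ Metric.ball s₀ δy ∩ Icc (0:ℝ) 1 :=
        ⟨Metric.mem_ball_self hδy, hs₀⟩
      obtain ⟨hyWy₀, hyKy₀⟩ := hy' s₀ hs₀ball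
      have hyW₀ : γ (s₀, y) ∈ W :=
        stepA s₀ ⟨Metric.mem_ball_self hδ, hs₀⟩ y ⟨hyball, hyab⟩
      set B := connectedComponentIn (W ∩ Wy) (γ (s₀, y)) with hB
      have hBo : IsOpen B := (hWo.inter hWyo).connectedComponentIn
      have hBc : IsConnected B := isConnected_connectedComponentIn_iff.mpr ⟨hyW₀, hyWy₀⟩
      have hK₀B : K₀ ∈ F.carrier B := F.restrict_mem W hWo hWc B hBo hBc
        ((connectedComponentIn_subset _ _).trans inter_subset_left) K₀ hKW
      have hKyB : Ky ∈ F.carrier B := F.restrict_mem Wy hWyo hWyc B hBo hBc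
        ((connectedComponentIn_subset _ _).trans inter_subset_right) Ky hKy
      have hgermeq : germAt I M (γ (s₀, y)) K₀ = germAt I M (γ (s₀, y)) Ky := by
        rw [← h1, hyKy₀]
      have hs'd : |s' - s₀| < δ := by rwa [Metric.mem_ball, Real.dist_eq] at hs'b
      have hsubI : uIcc s₀ s' ⊆ Icc (0:ℝ) 1 := by
        rw [← uIcc_of_le (zero_le_one' ℝ)]
        exact uIcc_subset_uIcc (by rwa [uIcc_of_le (zero_le_one' ℝ)])
          (by rwa [uIcc_of_le (zero_le_one' ℝ)])
      have hseg : γ '' (uIcc s₀ s' ×ˢ ({y} : Set ℝ)) ⊆ W ∩ Wy := by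
        rintro _ ⟨⟨σ, ψ⟩, ⟨hσ, hψ⟩, rfl⟩
        have hψy : ψ = y := hψ
        subst hψy
        have hσball : σ ∈ Metric.ball s₀ δ ∩ Icc (0:ℝ) 1 := by
          refine ⟨?_, hsubI hσ⟩
          rw [Metric.mem_ball, Real.dist_eq]
          exact abs_uIcc_lt hs'd hσ
        refine ⟨stepA σ hσball ψ ⟨hyball, hyab⟩, ?_⟩
        exact (hy' σ ⟨Metric.ball_subset_ball (min_le_left _ _) hσball.1, hσball.2⟩).1
      have hsegconn : IsPreconnected (γ '' (uIcc s₀ s' ×ˢ ({y} : Set ℝ))) :=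
        (isPreconnected_uIcc.prod isPreconnected_singleton).image γ
          (hγ.mono (fun w hw => ⟨hsubI hw.1, by
            have : w.2 = y := hw.2
            rw [this]; exact hyab⟩))
      have hsegB : γ '' (uIcc s₀ s' ×ˢ ({y} : Set ℝ)) ⊆ B :=
        hsegconn.subset_connectedComponentIn ⟨(s₀, y), ⟨left_mem_uIcc, rfl⟩, rfl⟩ hseg
      have hs'yB : γ (s', y) ∈ B := hsegB ⟨(s', y), ⟨right_mem_uIcc, rfl⟩, rfl⟩
      have hgermy : germAt I M (γ (s', y)) K₀ = g s' y := by
        have hB0 := germ_eq_on hUC hBo hBc hK₀B hKyB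
          (mem_connectedComponentIn ⟨hyW₀, hyWy₀⟩) hgermeq
        rw [hB0 (γ (s', y)) hs'yB]
        exact (hy' s' hs'δy).2
      have hcW' : ∀ θ ∈ uIcc y z, γ (s', θ) ∈ W := by
        intro θ hθ
        refine stepA s' ⟨hs'b, hs'I⟩ θ ⟨?_, ?_⟩
        · rw [Metric.mem_ball, Real.dist_eq, abs_sub_lt_iff]
          rw [abs_sub_lt_iff] at hyb hzb
          rcases mem_uIcc.mp hθ with ⟨h1, h2⟩ | ⟨h1, h2⟩ <;> constructor <;> linarith
        · have hsubT : uIcc y z ⊆ Icc a b := by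
            rw [← uIcc_of_le hab]
            exact uIcc_subset_uIcc (by rwa [uIcc_of_le hab]) (by rwa [uIcc_of_le hab])
          exact hsubT hθ
      have final := transport_propagate hUC (hslice s' hs'I) (htr s' hs'I)
        hWo hWc hKW hyab hzab hcW' hgermy
      exact ⟨stepA s' ⟨hs'b, hs'I⟩ z ⟨hzball, hzab⟩, final⟩
    exact preconn_prop isPreconnected_Icc P hAON (x := a) ⟨le_refl a, hab⟩ hPa b ⟨hab, le_refl b⟩
  -- Conclude using connectedness of [0,1]
  set f : ℝ → GermSpace I M q := fun s => if hs : s ∈ Icc (0:ℝ) 1 then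
    cast (congrArg (GermSpace I M) (hqb s hs)) (g s b) else 0 with hf
  have hfconst : ∀ s ∈ Icc (0:ℝ) 1, f s = f s₁ := by
    refine preconn_prop isPreconnected_Icc (fun s => f s = f s₁) ?_ hs₁ rfl
    intro s₀ hs₀
    obtain ⟨δ, hδ, W, K, hWo, hWc, hK, hprop⟩ := LC s₀ hs₀
    refine ⟨δ, hδ, ?_⟩
    have hval : ∀ w ∈ Metric.ball s₀ δ ∩ Icc (0:ℝ) 1, f w = germAt I M q K := by
      intro w hw
      obtain ⟨hwW, hwg⟩ := hprop w hw
      have hw1 : w ∈ Icc (0:ℝ) 1 := hw.2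
      rw [hf]
      simp only [dif_pos hw1]
      rw [← hwg]
      exact cast_germAt (hqb w hw1) K
    intro y hy z hz hPy
    show f z = f s₁
    rw [hval z hz, ← hval y hy]
    exact hPy
  have h2 := hfconst s₂ hs₂
  have e1 : f s₁ = cast (congrArg (GermSpace I M) (hqb s₁ hs₁)) (g s₁ b) := by
    rw [hf]; exact dif_pos hs₁
  have e2 : f s₂ = cast (congrArg (GermSpace I M) (hqb s₂ hs₂)) (g s₂ b) := by
    rw [hf]; exact dif_pos hs₂
  rw [← e1, ← e2]
  exact h2.symm
end
end

section
/- Let M be a smooth manifold and let 𝓕 be an admissible sheaf of local vector fields on M, with dim 𝓕(U) ≤ N for every connected open U. Then for every p ∈ M there exists a connected open neighborhood U of p such that the germ map 𝓕(U) → 𝔊^𝓕_p, K ↦ germ_p(K), is a linear isomorphism; in particular dim 𝔊^𝓕_p = κ^𝓕_p = dim 𝓕(U) ≤ N. -/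
open Set Manifold Topology

noncomputable section

variable {E : Type*} [NormedAddCommGroup E] [NormedSpace ℝ E]
  {H : Type*} [TopologicalSpace H]

variable (I : ModelWithCorners ℝ E H) (M : Type*) [TopologicalSpace M] [ChartedSpace H M]
  [IsManifold I ((⊤ : ℕ∞) : WithTop ℕ∞) M]

variable {I M}

set_option maxHeartbeats 1000000
set_option synthInstance.maxHeartbeats 400000
set_option linter.unusedSectionVars false

section StatementFourProof

variable [LocallyConnectedSpace M] {F : VFSheaf I M} {p : M}

/-- Restriction of families of tangent vectors from `U` to a subset `V`. -/
private def restrVF' (U V : Set M) (h : V ⊆ U) :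
    ((x : U) → TangentSpace I (x : M)) →ₗ[ℝ] ((x : V) → TangentSpace I (x : M)) where
  toFun f x := f ⟨x.1, h x.2⟩
  map_add' _ _ := rfl
  map_smul' _ _ := rfl

private lemma spanCarrier {U : Set M} (hUo : IsOpen U) (hUc : IsConnected U)
    {X : VF I M} (hX : X ∈ Submodule.span ℝ (F.carrier U)) : X ∈ F.carrier U := by
  induction hX using Submodule.span_induction with
  | mem x hx => exact hx
  | zero => exact F.zero_mem U hUo hUc
  | add x y _ _ hx hy => exact F.add_mem U hUo hUc x hx y hy
  | smul c x _ hx => exact F.smul_mem U hUo hUc c x hx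

private lemma eqOn_of_eqOn (hUC : F.UniqueContinuation) {U : Set M} (hUo : IsOpen U)
    (hUc : IsConnected U) {X Y : VF I M} (hX : X ∈ F.carrier U) (hY : Y ∈ F.carrier U)
    {V : Set M} (hVne : V.Nonempty) (hVo : IsOpen V) (hVU : V ⊆ U)
    (h : ∀ x ∈ V, X x = Y x) : ∀ x ∈ U, X x = Y x := by
  have hD : X + (-1 : ℝ) • Y ∈ F.carrier U :=
    F.add_mem U hUo hUc X hX _ (F.smul_mem U hUo hUc (-1) Y hY)
  have h0 : ∀ x ∈ U, (X + (-1 : ℝ) • Y) x = 0 := by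
    refine hUC U hUo hUc _ hD ⟨V, hVne, hVo, hVU, fun x hx => ?_⟩
    show X x + (-1 : ℝ) • Y x = 0
    rw [h x hx, neg_one_smul, add_neg_cancel]
  intro x hx
  have h1 : X x + (-1 : ℝ) • Y x = 0 := h0 x hx
  rw [neg_one_smul, ← sub_eq_add_neg] at h1
  exact sub_eq_zero.mp h1

private lemma germ_eq_of_eqOn {W : Set M} (hWo : IsOpen W) (hWc : IsConnected W)
    (hpW : p ∈ W) {X Y : VF I M} (h : ∀ x ∈ W, X x = Y x) :
    germAt I M p X = germAt I M p Y := by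
  rw [germAt, Submodule.mkQ_apply, Submodule.mkQ_apply, Submodule.Quotient.eq]
  exact ⟨W, hWo, hWc, hpW, fun x hx => by
    show X x - Y x = 0
    rw [h x hx, sub_self]⟩

private lemma fdim_mono (hUC : F.UniqueContinuation) {U V : Set M}
    (hUo : IsOpen U) (hUc : IsConnected U) (hVo : IsOpen V) (hVc : IsConnected V)
    (hVU : V ⊆ U) (hVne : V.Nonempty) : fdim F U ≤ fdim F V := by
  have hmaps : ∀ f ∈ Submodule.span ℝ (resVF I M U '' F.carrier U),
      restrVF' U V hVU f ∈ Submodule.span ℝ (resVF I M V '' F.carrier V) := by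
    intro f hf
    rw [Submodule.span_image] at hf ⊢
    obtain ⟨X, hX, rfl⟩ := hf
    exact ⟨X, Submodule.span_mono
      (fun Y hY => F.restrict_mem U hUo hUc V hVo hVc hVU Y hY) hX, rfl⟩
  have hinj : Function.Injective ((restrVF' U V hVU).restrict hmaps) := by
    intro a b hab
    ext1
    obtain ⟨f, hf⟩ := a
    obtain ⟨g, hg⟩ := b
    rw [Submodule.span_image] at hf hg
    obtain ⟨X₁, hX₁, rfl⟩ := hf
    obtain ⟨X₂, hX₂, rfl⟩ := hg
    have h1 : ∀ x ∈ V, X₁ x = X₂ x := by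
      intro x hx
      exact congrFun (congrArg Subtype.val hab) ⟨x, hx⟩
    have h2 : ∀ x ∈ U, X₁ x = X₂ x :=
      eqOn_of_eqOn hUC hUo hUc (spanCarrier hUo hUc hX₁) (spanCarrier hUo hUc hX₂)
        hVne hVo hVU h1
    show resVF I M U X₁ = resVF I M U X₂
    funext x
    exact h2 x x.2
  exact LinearMap.rank_le_of_injective _ hinj

end StatementFourProof

/-- For an admissible sheaf `𝓕` with `dim 𝓕(U) ≤ N` on all connected open
sets, every point `p` has a connected open neighbourhood `U` (containing `p`: this is part of
`IsSpecial`) on which the germ map `𝓕(U) → 𝔊^𝓕_p` is a linear isomorphism; in particular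
`dim 𝔊^𝓕_p = κ^𝓕_p = dim 𝓕(U) ≤ N`. -/
theorem statement4 [LocallyConnectedSpace M] (F : VFSheaf I M) (hF : F.Admissible)
    (N : ℕ) (hN : ∀ U : Set M, IsOpen U → IsConnected U → fdim F U ≤ (N : Cardinal)) (p : M) :
    ∃ U : Set M, IsSpecial F U p ∧
      Module.rank ℝ ↥(stalk F p) = kappa F p ∧ kappa F p = fdim F U ∧
      fdim F U ≤ (N : Cardinal) := by
  obtain ⟨hUC, -⟩ := hF
  have hne : Nonempty {U : Set M // IsOpen U ∧ IsConnected U ∧ p ∈ U} :=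
    ⟨⟨connectedComponentIn univ p, isOpen_univ.connectedComponentIn,
      isConnected_connectedComponentIn_iff.mpr (mem_univ p),
      mem_connectedComponentIn (mem_univ p)⟩⟩
  have hbdd : BddAbove (Set.range fun U : {U : Set M // IsOpen U ∧ IsConnected U ∧ p ∈ U} =>
      fdim F (U : Set M)) := ⟨(N : Cardinal), by
    rintro x ⟨U, rfl⟩
    exact hN U U.2.1 U.2.2.1⟩
  have hle : ∀ U : {U : Set M // IsOpen U ∧ IsConnected U ∧ p ∈ U},
      fdim F (U : Set M) ≤ kappa F p := fun U => le_ciSup hbdd U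
  have hkN : kappa F p ≤ (N : Cardinal) := ciSup_le fun U => hN U U.2.1 U.2.2.1
  obtain ⟨m, hm⟩ : ∃ m : ℕ, kappa F p = (m : Cardinal) :=
    Cardinal.lt_aleph0.mp (hkN.trans_lt (Cardinal.nat_lt_aleph0 N))
  have hexists : ∃ U : {U : Set M // IsOpen U ∧ IsConnected U ∧ p ∈ U},
      fdim F (U : Set M) = kappa F p := by
    rcases m with - | k
    · refine ⟨hne.some, le_antisymm (hle _) ?_⟩
      rw [hm, Nat.cast_zero]
      exact zero_le
    · have hk : (k : Cardinal) < kappa F p := by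
        rw [hm]
        exact_mod_cast Nat.lt_succ_self k
      obtain ⟨U, hU⟩ := (lt_ciSup_iff hbdd).mp hk
      refine ⟨U, le_antisymm (hle U) ?_⟩
      rw [hm]
      calc ((k + 1 : ℕ) : Cardinal) = (k : Cardinal) + 1 := by push_cast; ring
        _ ≤ Order.succ (k : Cardinal) := Cardinal.add_one_le_succ _
        _ ≤ fdim F (U : Set M) := Order.succ_le_of_lt hU
  obtain ⟨⟨U, hUo, hUc, hpU⟩, hUmax⟩ := hexists
  simp only at hUmax
  set S : Submodule ℝ (VF I M) := Submodule.span ℝ (F.carrier U) with hS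
  have key : ∀ V : Set M, IsOpen V → IsConnected V → p ∈ V → ∀ X ∈ F.carrier V,
      ∃ Y ∈ S, germAt I M p Y = germAt I M p X := by
    intro V hVo hVc hpV X hXV
    set W := connectedComponentIn (U ∩ V) p with hW
    have hpUV : p ∈ U ∩ V := ⟨hpU, hpV⟩
    have hWo : IsOpen W := (hUo.inter hVo).connectedComponentIn
    have hWc : IsConnected W := isConnected_connectedComponentIn_iff.mpr hpUV
    have hpW : p ∈ W := mem_connectedComponentIn hpUV
    have hWUV : W ⊆ U ∩ V := connectedComponentIn_subset _ _
    have hWU : W ⊆ U := hWUV.trans inter_subset_left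
    have hXW : X ∈ F.carrier W :=
      F.restrict_mem V hVo hVc W hWo hWc (hWUV.trans inter_subset_right) X hXV
    have hdim : fdim F U = fdim F W :=
      le_antisymm (fdim_mono hUC hUo hUc hWo hWc hWU ⟨p, hpW⟩)
        (hUmax ▸ hle ⟨W, hWo, hWc, hpW⟩)
    have hfin1 : Module.Finite ℝ ↥(Submodule.span ℝ (resVF I M U '' F.carrier U)) :=
      Module.rank_lt_aleph0_iff.mp ((hN U hUo hUc).trans_lt (Cardinal.nat_lt_aleph0 N))
    have hfin2 : Module.Finite ℝ ↥(Submodule.span ℝ (resVF I M W '' F.carrier W)) :=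
      Module.rank_lt_aleph0_iff.mp ((hN W hWo hWc).trans_lt (Cardinal.nat_lt_aleph0 N))
    have hmaps : ∀ f ∈ Submodule.span ℝ (resVF I M U '' F.carrier U),
        restrVF' U W hWU f ∈ Submodule.span ℝ (resVF I M W '' F.carrier W) := by
      intro f hf
      rw [Submodule.span_image] at hf ⊢
      obtain ⟨Y, hY, rfl⟩ := hf
      exact ⟨Y, Submodule.span_mono
        (fun Z hZ => F.restrict_mem U hUo hUc W hWo hWc hWU Z hZ) hY, rfl⟩
    have hinj : Function.Injective ((restrVF' U W hWU).restrict hmaps) := by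
      intro a b hab
      ext1
      obtain ⟨f, hf⟩ := a
      obtain ⟨g, hg⟩ := b
      rw [Submodule.span_image] at hf hg
      obtain ⟨X₁, hX₁, rfl⟩ := hf
      obtain ⟨X₂, hX₂, rfl⟩ := hg
      have h1 : ∀ x ∈ W, X₁ x = X₂ x := fun x hx =>
        congrFun (congrArg Subtype.val hab) ⟨x, hx⟩
      have h2 : ∀ x ∈ U, X₁ x = X₂ x :=
        eqOn_of_eqOn hUC hUo hUc (spanCarrier hUo hUc hX₁) (spanCarrier hUo hUc hX₂)
          ⟨p, hpW⟩ hWo hWU h1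
      show resVF I M U X₁ = resVF I M U X₂
      funext x
      exact h2 x x.2
    have hfr : Module.finrank ℝ ↥(Submodule.span ℝ (resVF I M U '' F.carrier U)) =
        Module.finrank ℝ ↥(Submodule.span ℝ (resVF I M W '' F.carrier W)) := by
      have h := hdim
      unfold fdim at h
      rw [← Module.finrank_eq_rank, ← Module.finrank_eq_rank, Nat.cast_inj] at h
      exact h
    have hsurj : Function.Surjective ((restrVF' U W hWU).restrict hmaps) :=
      (LinearMap.injective_iff_surjective_of_finrank_eq_finrank hfr).mp hinj
    have hXmem : resVF I M W X ∈ Submodule.span ℝ (resVF I M W '' F.carrier W) :=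
      Submodule.subset_span ⟨X, hXW, rfl⟩
    obtain ⟨⟨f, hf⟩, hρf⟩ := hsurj ⟨resVF I M W X, hXmem⟩
    rw [Submodule.span_image] at hf
    obtain ⟨Y, hY, rfl⟩ := hf
    refine ⟨Y, hY, germ_eq_of_eqOn hWo hWc hpW ?_⟩
    intro x hx
    exact congrFun (congrArg Subtype.val hρf) ⟨x, hx⟩
  have hstalk : stalk F p = Submodule.map (germAt I M p) S := by
    apply le_antisymm
    · rw [stalk]
      apply Submodule.span_le.mpr
      rintro g ⟨V, X, hVo, hVc, hpV, hXV, rfl⟩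
      obtain ⟨Y, hY, hYX⟩ := key V hVo hVc hpV X hXV
      exact ⟨Y, hY, hYX⟩
    · rw [hS, ← Submodule.span_image]
      apply Submodule.span_le.mpr
      rintro g ⟨X, hX, rfl⟩
      exact Submodule.subset_span ⟨U, X, hUo, hUc, hpU, hX, rfl⟩
  have hker : LinearMap.ker ((resVF I M U).comp S.subtype) =
      LinearMap.ker ((germAt I M p).comp S.subtype) := by
    ext ⟨X, hX⟩
    simp only [LinearMap.mem_ker, LinearMap.comp_apply, Submodule.subtype_apply]
    constructor
    · intro h
      rw [germAt, Submodule.mkQ_apply, Submodule.Quotient.mk_eq_zero]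
      exact ⟨U, hUo, hUc, hpU, fun x hx => congrFun h ⟨x, hx⟩⟩
    · intro h
      rw [germAt, Submodule.mkQ_apply, Submodule.Quotient.mk_eq_zero] at h
      obtain ⟨V, hVo, hVc, hpV, hXV⟩ := h
      have h0 : ∀ x ∈ U, X x = 0 :=
        hUC U hUo hUc X (spanCarrier hUo hUc hX)
          ⟨V ∩ U, ⟨p, hpV, hpU⟩, hVo.inter hUo, inter_subset_right,
            fun x hx => hXV x hx.1⟩
      funext x
      exact h0 x x.2
  have hrank : Module.rank ℝ ↥(stalk F p) = fdim F U := by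
    have e1 := (LinearMap.quotKerEquivRange ((resVF I M U).comp S.subtype)).rank_eq
    have e2 := (LinearMap.quotKerEquivRange ((germAt I M p).comp S.subtype)).rank_eq
    have hr1 : LinearMap.range ((resVF I M U).comp S.subtype) =
        Submodule.span ℝ (resVF I M U '' F.carrier U) := by
      rw [LinearMap.range_comp, Submodule.range_subtype, hS, Submodule.span_image]
    have hr2 : LinearMap.range ((germAt I M p).comp S.subtype) = stalk F p := by
      rw [LinearMap.range_comp, Submodule.range_subtype, hstalk]
    rw [← hr2, ← e2, ← hker, e1, hr1]
    rfl
  refine ⟨U, ⟨hUo, hUc, hpU, ?_, ?_⟩, ?_, hUmax.symm, hN U hUo hUc⟩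
  · intro K₁ hK₁ K₂ hK₂ hg x hx
    rw [germAt, Submodule.mkQ_apply, Submodule.mkQ_apply, Submodule.Quotient.eq] at hg
    obtain ⟨V, hVo, hVc, hpV, hV⟩ := hg
    exact eqOn_of_eqOn (V := V ∩ U) hUC hUo hUc hK₁ hK₂ ⟨p, hpV, hpU⟩ (hVo.inter hUo)
      inter_subset_right
      (fun y hy => sub_eq_zero.mp (show K₁ y - K₂ y = 0 from hV y hy.1)) x hx
  · intro g hg
    rw [hstalk] at hg
    obtain ⟨Y, hY, rfl⟩ := hg
    exact ⟨Y, spanCarrier hUo hUc hY, rfl⟩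
  · rw [hrank, hUmax]
end
end

section
/- Let M be a smooth manifold and let 𝓕 be an admissible sheaf of local vector fields on M. Then the map M → ℕ, p ↦ κ^𝓕_p, is lower semi-continuous; that is, every p ∈ M has an open neighborhood 𝒰 such that κ^𝓕_q ≥ κ^𝓕_p for all q ∈ 𝒰. -/
open Set Manifold Topology

noncomputable section

variable {E : Type*} [NormedAddCommGroup E] [NormedSpace ℝ E]
  {H : Type*} [TopologicalSpace H]

variable (I : ModelWithCorners ℝ E H) (M : Type*) [TopologicalSpace M] [ChartedSpace H M]
  [IsManifold I ((⊤ : ℕ∞) : WithTop ℕ∞) M]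

variable {I M}

/-- For an admissible sheaf `𝓕`, the map `p ↦ κ^𝓕_p` is lower
semi-continuous: every `p` has an open neighbourhood `𝒰` with `κ^𝓕_q ≥ κ^𝓕_p` for `q ∈ 𝒰`. -/
theorem statement5 (F : VFSheaf I M) (hF : F.Admissible) (p : M) :
    ∃ 𝒰 : Set M, IsOpen 𝒰 ∧ p ∈ 𝒰 ∧ ∀ q ∈ 𝒰, kappa F p ≤ kappa F q := by
  obtain ⟨N, hN⟩ := hF.2
  by_cases h : Nonempty {U : Set M // IsOpen U ∧ IsConnected U ∧ p ∈ U}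
  · -- the sup defining `kappa F p` is attained at some `U₀`
    set f : {U : Set M // IsOpen U ∧ IsConnected U ∧ p ∈ U} → Cardinal :=
      fun U => fdim F (U : Set M) with hf
    have hrange : (Set.range f).Finite := by
      apply Set.Finite.subset ((Set.finite_Iic N).image (fun m : ℕ => (m : Cardinal)))
      rintro c ⟨V, rfl⟩
      have hle : f V ≤ (N : Cardinal) := hN V V.2.1 V.2.2.1
      obtain ⟨m, hm⟩ := Cardinal.lt_aleph0.mp (hle.trans_lt (Cardinal.nat_lt_aleph0 N))
      exact ⟨m, by exact_mod_cast hm ▸ hle, hm.symm⟩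
    have hmem : sSup (Set.range f) ∈ Set.range f :=
      (Set.range_nonempty f).csSup_mem hrange
    obtain ⟨U₀, hU₀⟩ := hmem
    refine ⟨U₀, U₀.2.1, U₀.2.2.2, fun q hq => ?_⟩
    have hk : kappa F p = f U₀ := hU₀.symm
    rw [hk]
    have hBdd : BddAbove (Set.range fun U : {U : Set M // IsOpen U ∧ IsConnected U ∧ q ∈ U} =>
        fdim F (U : Set M)) := by
      refine ⟨(N : Cardinal), ?_⟩
      rintro c ⟨V, rfl⟩
      exact hN V V.2.1 V.2.2.1
    exact le_ciSup hBdd (⟨U₀, U₀.2.1, U₀.2.2.1, hq⟩ :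
      {U : Set M // IsOpen U ∧ IsConnected U ∧ q ∈ U})
  · refine ⟨univ, isOpen_univ, mem_univ p, fun q _ => ?_⟩
    have : kappa F p = 0 := by
      haveI : IsEmpty {U : Set M // IsOpen U ∧ IsConnected U ∧ p ∈ U} := not_nonempty_iff.mp h
      rw [kappa, ciSup_of_empty]
      rfl
    simp [this]
end
end

section
/- Let M be a smooth manifold and let 𝓕 be an admissible sheaf of local vector fields on M. If a connected open set U ⊆ M is 𝓕-special for p ∈ U, and U' ⊆ U is a connected open subset containing p, then U' is also 𝓕-special for p. In particular, every point of M admits arbitrarily small 𝓕-special connected open neighborhoods. -/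
open Set Manifold Topology

noncomputable section

variable {E : Type*} [NormedAddCommGroup E] [NormedSpace ℝ E]
  {H : Type*} [TopologicalSpace H]

variable (I : ModelWithCorners ℝ E H) (M : Type*) [TopologicalSpace M] [ChartedSpace H M]
  [IsManifold I (⊤ : ℕ∞) M]

variable {I M}

section Aux

variable [LocallyConnectedSpace M]

/-- The carrier of a sheaf on a connected open set, as a submodule. -/
private def Fsub (F : VFSheaf I M) (U : Set M) (hU : IsOpen U) (hUc : IsConnected U) :
    Submodule ℝ (VF I M) where
  carrier := F.carrier U
  zero_mem' := F.zero_mem U hU hUc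
  add_mem' hx hy := F.add_mem U hU hUc _ hx _ hy
  smul_mem' c _ hx := F.smul_mem U hU hUc c _ hx

private lemma span_carrier_eq (F : VFSheaf I M) (U : Set M) (hU : IsOpen U)
    (hUc : IsConnected U) :
    Submodule.span ℝ (F.carrier U) = Fsub F U hU hUc :=
  Submodule.span_eq (Fsub F U hU hUc)

/-- The image in the germ space at `p` of the local fields on `U`. -/
private def Simg (F : VFSheaf I M) (p : M) (U : Set M) : Submodule ℝ (GermSpace I M p) :=
  Submodule.map (germAt I M p) (Submodule.span ℝ (F.carrier U))

private lemma rank_Simg_le (F : VFSheaf I M) {p : M} {U : Set M} (hU : IsOpen U)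
    (hUc : IsConnected U) (hp : p ∈ U) :
    Module.rank ℝ (Simg F p U) ≤ fdim F U := by
  set W := Submodule.span ℝ (F.carrier U) with hW
  have hker : LinearMap.ker ((resVF I M U).domRestrict W) ≤
      LinearMap.ker ((germAt I M p).domRestrict W) := by
    intro x hx
    rw [LinearMap.mem_ker] at hx ⊢
    show germAt I M p (x : VF I M) = 0
    rw [germAt, Submodule.mkQ_apply, Submodule.Quotient.mk_eq_zero]
    exact ⟨U, hU, hUc, hp, fun z hz => congrFun hx ⟨z, hz⟩⟩
  have e1 : Module.rank ℝ (Simg F p U) =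
      Module.rank ℝ (W ⧸ LinearMap.ker ((germAt I M p).domRestrict W)) := by
    rw [Simg, ← hW, ← LinearMap.range_domRestrict]
    exact (((germAt I M p).domRestrict W).quotKerEquivRange.rank_eq).symm
  have e2 : fdim F U =
      Module.rank ℝ (W ⧸ LinearMap.ker ((resVF I M U).domRestrict W)) := by
    rw [fdim, Submodule.span_image, ← hW, ← LinearMap.range_domRestrict]
    exact (((resVF I M U).domRestrict W).quotKerEquivRange.rank_eq).symm
  rw [e1, e2]
  have hsurj : Function.Surjective
      (Submodule.mapQ _ _ (LinearMap.id) (by simpa using hker) :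
        (W ⧸ LinearMap.ker ((resVF I M U).domRestrict W)) →ₗ[ℝ]
          (W ⧸ LinearMap.ker ((germAt I M p).domRestrict W))) := by
    rintro ⟨x⟩
    exact ⟨Submodule.Quotient.mk x, rfl⟩
  exact LinearMap.rank_le_of_surjective _ hsurj

private lemma Simg_mono (F : VFSheaf I M) (p : M) {U V : Set M} (hUo : IsOpen U)
    (hUc : IsConnected U) (hVo : IsOpen V) (hVc : IsConnected V) (hVU : V ⊆ U) :
    Simg F p U ≤ Simg F p V :=
  Submodule.map_mono (Submodule.span_mono
    (fun X hX => F.restrict_mem U hUo hUc V hVo hVc hVU X hX))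

/-- Injectivity of the germ map on any connected open neighbourhood, from unique
continuation. -/
private lemma inj_of_UC (F : VFSheaf I M) (hUC : F.UniqueContinuation) {U : Set M} {p : M}
    (hU : IsOpen U) (hUc : IsConnected U) (hp : p ∈ U) :
    ∀ K₁ ∈ F.carrier U, ∀ K₂ ∈ F.carrier U,
      germAt I M p K₁ = germAt I M p K₂ → ∀ x ∈ U, K₁ x = K₂ x := by
  intro K₁ h₁ K₂ h₂ hg x hx
  have hsub : K₁ - K₂ ∈ F.carrier U := (Fsub F U hU hUc).sub_mem h₁ h₂
  have hnull : K₁ - K₂ ∈ germNull I M p := by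
    rwa [germAt, Submodule.mkQ_apply, Submodule.mkQ_apply, Submodule.Quotient.eq] at hg
  obtain ⟨V, hVo, hVc, hpV, hV0⟩ := hnull
  have h0 : (K₁ - K₂) x = 0 :=
    hUC U hU hUc _ hsub ⟨V ∩ U, ⟨p, hpV, hp⟩, hVo.inter hU, inter_subset_right,
      fun y hy => hV0 y hy.1⟩ x hx
  exact sub_eq_zero.mp h0

/-- Speciality descends to connected open subneighbourhoods. -/
private lemma special_anti (F : VFSheaf I M) (hUC : F.UniqueContinuation) {U U' : Set M}
    {p : M} (h : IsSpecial F U p) (hU'o : IsOpen U') (hU'c : IsConnected U') (hp' : p ∈ U')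
    (hsub : U' ⊆ U) : IsSpecial F U' p := by
  obtain ⟨hUo, hUc, hp, -, hsurj⟩ := h
  refine ⟨hU'o, hU'c, hp', inj_of_UC F hUC hU'o hU'c hp', ?_⟩
  intro g hg
  obtain ⟨K, hK, hKg⟩ := hsurj g hg
  exact ⟨K, F.restrict_mem U hUo hUc U' hU'o hU'c hsub K hK, hKg⟩

set_option maxHeartbeats 1000000 in
set_option synthInstance.maxHeartbeats 1000000 in
/-- Every point admits some `𝓕`-special neighbourhood. -/
private lemma exists_special (F : VFSheaf I M) (hF : F.Admissible) (p : M) :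
    ∃ U : Set M, IsSpecial F U p := by
  obtain ⟨hUC, N, hN⟩ := hF
  have hfin : ∀ U : Set M, IsOpen U → IsConnected U → p ∈ U →
      FiniteDimensional ℝ (Simg F p U) := by
    intro U hU hUc hp
    have h1 := (rank_Simg_le F hU hUc hp).trans (hN U hU hUc)
    exact Module.rank_lt_aleph0_iff.mp (h1.trans_lt (Cardinal.nat_lt_aleph0 N))
  have hle : ∀ U : Set M, IsOpen U → IsConnected U → p ∈ U →
      Module.finrank ℝ (Simg F p U) ≤ N := fun U hU hUc hp =>
    Module.finrank_le_of_rank_le ((rank_Simg_le F hU hUc hp).trans (hN U hU hUc))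
  set T : Set ℕ := {n | ∃ U : Set M, IsOpen U ∧ IsConnected U ∧ p ∈ U ∧
    Module.finrank ℝ (Simg F p U) = n} with hT
  have hTne : T.Nonempty := ⟨_, connectedComponentIn univ p, isOpen_univ.connectedComponentIn,
    isConnected_connectedComponentIn_iff.mpr (mem_univ p),
    mem_connectedComponentIn (mem_univ p), rfl⟩
  have hTbdd : BddAbove T := ⟨N, by rintro n ⟨U, hU, hUc, hp, rfl⟩; exact hle U hU hUc hp⟩
  obtain ⟨U₀, hU₀o, hU₀c, hpU₀, hn₀⟩ := Nat.sSup_mem hTne hTbdd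
  have hmax : ∀ U : Set M, IsOpen U → IsConnected U → p ∈ U →
      Module.finrank ℝ (Simg F p U) ≤ Module.finrank ℝ (Simg F p U₀) := by
    intro U hU hUc hp
    rw [hn₀]
    exact le_csSup hTbdd ⟨U, hU, hUc, hp, rfl⟩
  have hstalk : stalk F p ≤ Simg F p U₀ := by
    rw [stalk]
    apply Submodule.span_le.2
    rintro g ⟨V, X, hVo, hVc, hpV, hXV, rfl⟩
    set W' := connectedComponentIn (U₀ ∩ V) p with hW'
    have hWo : IsOpen W' := (hU₀o.inter hVo).connectedComponentIn
    have hpW : p ∈ W' := mem_connectedComponentIn ⟨hpU₀, hpV⟩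
    have hWc : IsConnected W' := isConnected_connectedComponentIn_iff.mpr ⟨hpU₀, hpV⟩
    have hWsub : W' ⊆ U₀ ∩ V := connectedComponentIn_subset _ _
    have hle₀ : Simg F p U₀ ≤ Simg F p W' :=
      Simg_mono F p hU₀o hU₀c hWo hWc (hWsub.trans inter_subset_left)
    haveI := hfin W' hWo hWc hpW
    have heq : Simg F p U₀ = Simg F p W' :=
      Submodule.eq_of_le_of_finrank_le hle₀ (hmax W' hWo hWc hpW)
    rw [heq]
    have hXW : X ∈ F.carrier W' :=
      F.restrict_mem V hVo hVc W' hWo hWc (hWsub.trans inter_subset_right) X hXV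
    exact ⟨X, Submodule.subset_span hXW, rfl⟩
  refine ⟨U₀, hU₀o, hU₀c, hpU₀, inj_of_UC F hUC hU₀o hU₀c hpU₀, ?_⟩
  intro g hg
  obtain ⟨X, hX, hXg⟩ := hstalk hg
  rw [span_carrier_eq F U₀ hU₀o hU₀c] at hX
  exact ⟨X, hX, hXg⟩

end Aux

/-- For an admissible sheaf `𝓕`: if `U` is `𝓕`-special for `p` and
`U' ⊆ U` is a connected open subset containing `p`, then `U'` is `𝓕`-special for `p`.
In particular, every point admits arbitrarily small `𝓕`-special connected open
neighbourhoods. -/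
theorem statement6 [LocallyConnectedSpace M] (F : VFSheaf I M) (hF : F.Admissible) :
    (∀ (U U' : Set M) (p : M), IsSpecial F U p →
      IsOpen U' → IsConnected U' → p ∈ U' → U' ⊆ U → IsSpecial F U' p) ∧
    (∀ p : M, ∀ W ∈ nhds p, ∃ U'' : Set M, U'' ⊆ W ∧ IsSpecial F U'' p) := by
  refine ⟨fun U U' p h hU'o hU'c hp' hsub => special_anti F hF.1 h hU'o hU'c hp' hsub, ?_⟩
  intro p W hW
  obtain ⟨U₀, hU₀⟩ := exists_special F hF p
  obtain ⟨hU₀o, hU₀c, hpU₀, -, -⟩ := id hU₀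
  have hpint : p ∈ interior W := mem_interior_iff_mem_nhds.mpr hW
  have hpV : p ∈ interior W ∩ U₀ := ⟨hpint, hpU₀⟩
  refine ⟨connectedComponentIn (interior W ∩ U₀) p,
    (connectedComponentIn_subset _ _).trans (inter_subset_left.trans interior_subset),
    special_anti F hF.1 hU₀ ((isOpen_interior.inter hU₀o).connectedComponentIn)
      (isConnected_connectedComponentIn_iff.mpr hpV) (mem_connectedComponentIn hpV)
      ((connectedComponentIn_subset _ _).trans inter_subset_right)⟩
end
end

section
/- Let M be a smooth manifold and let 𝓕 be an admissible sheaf of local vector fields on M. Let U ⊆ M be an open set, p ∈ U, and assume that κ^𝓕_q is constant for q ∈ U. Then there exists a connected open subset U' ⊆ U containing p which is 𝓕-special for every one of its points. -/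
open Set Manifold Topology

noncomputable section

variable {E : Type*} [NormedAddCommGroup E] [NormedSpace ℝ E]
  {H : Type*} [TopologicalSpace H]

variable (I : ModelWithCorners ℝ E H) (M : Type*) [TopologicalSpace M] [ChartedSpace H M]
  [IsManifold I (⊤ : ℕ∞) M]

variable {I M}

section Aux

/-- The carrier of a sheaf on a connected open set, as a submodule of `VF I M`. -/
def carrSub (F : VFSheaf I M) (U : Set M) (hU : IsOpen U) (hUc : IsConnected U) :
    Submodule ℝ (VF I M) where
  carrier := F.carrier U
  zero_mem' := F.zero_mem U hU hUc
  add_mem' := fun hX hY => F.add_mem U hU hUc _ hX _ hY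
  smul_mem' := fun c {X} hX => F.smul_mem U hU hUc c X hX

lemma fdim_eq_rank_map (F : VFSheaf I M) (U : Set M) (hU : IsOpen U) (hUc : IsConnected U) :
    fdim F U = Module.rank ℝ ↥((carrSub F U hU hUc).map (resVF I M U)) := by
  have h : Submodule.span ℝ (resVF I M U '' F.carrier U)
      = (carrSub F U hU hUc).map (resVF I M U) := by
    rw [show resVF I M U '' F.carrier U = resVF I M U '' ↑(carrSub F U hU hUc) from rfl,
      ← Submodule.map_span, Submodule.span_eq]
  rw [fdim, h]

variable (I M) in
/-- Restriction of families of tangent vectors from a subset `W` to a subset `V ⊆ W`. -/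
def resTo {V W : Set M} (h : V ⊆ W) :
    ((x : W) → TangentSpace I (x : M)) →ₗ[ℝ] ((x : V) → TangentSpace I (x : M)) where
  toFun f := fun x => f ⟨x, h x.2⟩
  map_add' _ _ := rfl
  map_smul' _ _ := rfl

lemma rank_res_eq (F : VFSheaf I M) (huc : F.UniqueContinuation)
    {W : Set M} (hWo : IsOpen W) (hWc : IsConnected W)
    {V : Set M} (hVW : V ⊆ W) (hVo : IsOpen V) (hVne : V.Nonempty)
    (A : Submodule ℝ (VF I M)) (hA : ∀ X ∈ A, X ∈ F.carrier W) :
    Module.rank ℝ ↥(A.map (resVF I M W)) = Module.rank ℝ ↥(A.map (resVF I M V)) := by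
  set P := A.map (resVF I M W) with hP
  have hinj : Function.Injective ((resTo I M hVW).comp P.subtype) := by
    rw [← LinearMap.ker_eq_bot, LinearMap.ker_eq_bot']
    rintro ⟨y, hy⟩ h0
    obtain ⟨X, hXA, rfl⟩ := hy
    have hvan : ∀ x ∈ V, X x = 0 := by
      intro x hx
      exact congrFun h0 ⟨x, hx⟩
    have hX0 : ∀ x ∈ W, X x = 0 :=
      huc W hWo hWc X (hA X hXA) ⟨V, hVne, hVo, hVW, hvan⟩
    apply Subtype.ext
    funext x
    exact hX0 x x.2
  have hrange : LinearMap.range ((resTo I M hVW).comp P.subtype) = A.map (resVF I M V) := by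
    rw [LinearMap.range_comp, Submodule.range_subtype, hP, ← Submodule.map_comp]
    congr 1
  have := rank_range_of_injective ((resTo I M hVW).comp P.subtype) hinj
  rw [hrange] at this
  exact this.symm

lemma fdim_mono_s7 (F : VFSheaf I M) (huc : F.UniqueContinuation)
    {W : Set M} (hWo : IsOpen W) (hWc : IsConnected W)
    {V : Set M} (hVo : IsOpen V) (hVc : IsConnected V) (hVW : V ⊆ W) :
    fdim F W ≤ fdim F V := by
  rw [fdim_eq_rank_map F W hWo hWc, fdim_eq_rank_map F V hVo hVc,
    rank_res_eq F huc hWo hWc hVW hVo hVc.nonempty (carrSub F W hWo hWc) (fun _ hX => hX)]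
  exact Submodule.rank_mono (Submodule.map_mono
    (fun X hX => F.restrict_mem W hWo hWc V hVo hVc hVW X hX))

end Aux

/-- For an admissible sheaf `𝓕`: if `p ∈ U`, `U` open, and `κ^𝓕` is constant
on `U`, then there is a connected open subset `U' ⊆ U` containing `p` which is `𝓕`-special for
every one of its points. -/
theorem statement7 [LocallyConnectedSpace M] (F : VFSheaf I M) (hF : F.Admissible)
    (U : Set M) (hU : IsOpen U) (p : M) (hp : p ∈ U)
    (hconst : ∀ q ∈ U, ∀ q' ∈ U, kappa F q = kappa F q') :
    ∃ U' : Set M, U' ⊆ U ∧ p ∈ U' ∧ ∀ q ∈ U', IsSpecial F U' q := by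
  obtain ⟨huc, N, hN⟩ := hF
  have hbdd : ∀ q : M, BddAbove (Set.range fun W :
      {W : Set M // IsOpen W ∧ IsConnected W ∧ q ∈ W} => fdim F (W : Set M)) := by
    intro q
    refine ⟨(N : Cardinal), ?_⟩
    rintro _ ⟨⟨W, hWo, hWc, hqW⟩, rfl⟩
    exact hN W hWo hWc
  have hfin : ∀ W : Set M, IsOpen W → IsConnected W → fdim F W < Cardinal.aleph0 :=
    fun W hWo hWc => lt_of_le_of_lt (hN W hWo hWc) (Cardinal.nat_lt_aleph0 N)
  set S : Set ℕ := {n | ∃ W : Set M, IsOpen W ∧ IsConnected W ∧ p ∈ W ∧ W ⊆ U ∧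
    Cardinal.toNat (fdim F W) = n} with hSdef
  have hSne : S.Nonempty :=
    ⟨_, connectedComponentIn U p, hU.connectedComponentIn,
      isConnected_connectedComponentIn_iff.mpr hp, mem_connectedComponentIn hp,
      connectedComponentIn_subset U p, rfl⟩
  have hSbdd : BddAbove S := by
    refine ⟨N, ?_⟩
    rintro n ⟨W, hWo, hWc, _, _, rfl⟩
    have := Cardinal.toNat_le_toNat (hN W hWo hWc) (Cardinal.nat_lt_aleph0 N)
    simpa using this
  obtain ⟨U₀, hU₀o, hU₀c, hpU₀, hU₀U, hU₀n⟩ := Nat.sSup_mem hSne hSbdd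
  -- maximality of fdim F U₀ among connected open subsets of U
  have hmax : ∀ W : Set M, IsOpen W → IsConnected W → p ∈ W → W ⊆ U →
      fdim F W ≤ fdim F U₀ := by
    intro W hWo hWc hpW hWU
    have h1 : Cardinal.toNat (fdim F W) ∈ S := ⟨W, hWo, hWc, hpW, hWU, rfl⟩
    have h2 : Cardinal.toNat (fdim F W) ≤ sSup S := le_csSup hSbdd h1
    rw [← hU₀n] at h2
    calc fdim F W = ((Cardinal.toNat (fdim F W) : ℕ) : Cardinal) :=
          (Cardinal.cast_toNat_of_lt_aleph0 (hfin W hWo hWc)).symm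
      _ ≤ ((Cardinal.toNat (fdim F U₀) : ℕ) : Cardinal) := by exact_mod_cast h2
      _ = fdim F U₀ := Cardinal.cast_toNat_of_lt_aleph0 (hfin U₀ hU₀o hU₀c)
  have hkp : kappa F p = fdim F U₀ := by
    haveI : Nonempty {W : Set M // IsOpen W ∧ IsConnected W ∧ p ∈ W} :=
      ⟨⟨connectedComponentIn univ p, isOpen_univ.connectedComponentIn,
        isConnected_connectedComponentIn_iff.mpr (mem_univ p),
        mem_connectedComponentIn (mem_univ p)⟩⟩
    apply le_antisymm
    · refine ciSup_le ?_
      rintro ⟨W, hWo, hWc, hpW⟩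
      set W' := connectedComponentIn (W ∩ U) p with hW'def
      have hW'o : IsOpen W' := (hWo.inter hU).connectedComponentIn
      have hW'c : IsConnected W' := isConnected_connectedComponentIn_iff.mpr ⟨hpW, hp⟩
      have h1 : fdim F W ≤ fdim F W' := fdim_mono_s7 F huc hWo hWc hW'o hW'c
        ((connectedComponentIn_subset _ _).trans inter_subset_left)
      exact h1.trans (hmax W' hW'o hW'c (mem_connectedComponentIn ⟨hpW, hp⟩)
        ((connectedComponentIn_subset _ _).trans inter_subset_right))
    · exact le_ciSup (hbdd p) ⟨U₀, hU₀o, hU₀c, hpU₀⟩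
  refine ⟨U₀, hU₀U, hpU₀, fun q hq => ⟨hU₀o, hU₀c, hq, ?_, ?_⟩⟩
  · -- injectivity of the germ map on 𝓕(U₀)
    intro K₁ hK₁ K₂ hK₂ hgerm x hx
    have hmem : K₁ - K₂ ∈ germNull I M q := by
      rw [germAt, Submodule.mkQ_apply, Submodule.mkQ_apply, Submodule.Quotient.eq] at hgerm
      exact hgerm
    obtain ⟨V, hVo, hVc, hqV, hvan⟩ := hmem
    set V' := connectedComponentIn (V ∩ U₀) q with hV'def
    have hV'o : IsOpen V' := (hVo.inter hU₀o).connectedComponentIn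
    have hV'ne : V'.Nonempty := ⟨q, mem_connectedComponentIn ⟨hqV, hq⟩⟩
    have hXmem : K₁ - K₂ ∈ F.carrier U₀ :=
      (carrSub F U₀ hU₀o hU₀c).sub_mem hK₁ hK₂
    have h0 : (K₁ - K₂) x = 0 := huc U₀ hU₀o hU₀c (K₁ - K₂) hXmem
      ⟨V', hV'ne, hV'o, (connectedComponentIn_subset _ _).trans inter_subset_right,
        fun y hy => hvan y ((connectedComponentIn_subset _ _ hy).1)⟩ x hx
    have h1 : K₁ x - K₂ x = 0 := h0
    exact sub_eq_zero.mp h1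
  · -- surjectivity onto the stalk
    intro g hg
    have hT : stalk F q ≤ (carrSub F U₀ hU₀o hU₀c).map (germAt I M q) := by
      rw [stalk]
      refine Submodule.span_le.mpr ?_
      rintro _ ⟨V, X, hVo, hVc, hqV, hXV, rfl⟩
      set W := connectedComponentIn (V ∩ U₀) q with hWdef
      have hWo : IsOpen W := (hVo.inter hU₀o).connectedComponentIn
      have hWc : IsConnected W := isConnected_connectedComponentIn_iff.mpr ⟨hqV, hq⟩
      have hqW : q ∈ W := mem_connectedComponentIn ⟨hqV, hq⟩
      have hWV : W ⊆ V := (connectedComponentIn_subset _ _).trans inter_subset_left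
      have hWU₀ : W ⊆ U₀ := (connectedComponentIn_subset _ _).trans inter_subset_right
      have hXW : X ∈ F.carrier W := F.restrict_mem V hVo hVc W hWo hWc hWV X hXV
      have hle : (carrSub F U₀ hU₀o hU₀c).map (resVF I M W)
          ≤ (carrSub F W hWo hWc).map (resVF I M W) :=
        Submodule.map_mono (fun Y hY => F.restrict_mem U₀ hU₀o hU₀c W hWo hWc hWU₀ Y hY)
      have hrP : Module.rank ℝ ↥((carrSub F U₀ hU₀o hU₀c).map (resVF I M W)) = fdim F U₀ := by
        rw [fdim_eq_rank_map F U₀ hU₀o hU₀c,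
          rank_res_eq F huc hU₀o hU₀c hWU₀ hWo hWc.nonempty _ (fun _ hY => hY)]
      have hrQ : Module.rank ℝ ↥((carrSub F W hWo hWc).map (resVF I M W)) = fdim F W :=
        (fdim_eq_rank_map F W hWo hWc).symm
      have hWle : fdim F W ≤ fdim F U₀ := by
        calc fdim F W ≤ kappa F q := le_ciSup (hbdd q) ⟨W, hWo, hWc, hqW⟩
          _ = kappa F p := hconst q (hU₀U hq) p hp
          _ = fdim F U₀ := hkp
      haveI hQfree : Module.Free ℝ ↥((carrSub F W hWo hWc).map (resVF I M W)) :=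
        Module.Free.of_divisionRing _ _
      haveI hQfin : Module.Finite ℝ ↥((carrSub F W hWo hWc).map (resVF I M W)) := by
        rw [← Module.rank_lt_aleph0_iff, hrQ]
        exact hfin W hWo hWc
      have hPQ : (carrSub F U₀ hU₀o hU₀c).map (resVF I M W)
          = (carrSub F W hWo hWc).map (resVF I M W) := by
        refine Submodule.eq_of_le_of_finrank_le hle ?_
        have h1 : Module.rank ℝ ↥((carrSub F W hWo hWc).map (resVF I M W))
            ≤ Module.rank ℝ ↥((carrSub F U₀ hU₀o hU₀c).map (resVF I M W)) := by
          rw [hrP, hrQ]; exact hWle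
        have h2 := Cardinal.toNat_le_toNat h1 (by rw [hrP]; exact hfin U₀ hU₀o hU₀c)
        simpa [Module.finrank] using h2
      have hXQ : resVF I M W X ∈ (carrSub F U₀ hU₀o hU₀c).map (resVF I M W) := by
        rw [hPQ]; exact ⟨X, hXW, rfl⟩
      obtain ⟨K', hK', hres⟩ := hXQ
      refine ⟨K', hK', ?_⟩
      rw [germAt, Submodule.mkQ_apply, Submodule.mkQ_apply, Submodule.Quotient.eq]
      refine ⟨W, hWo, hWc, hqW, fun y hy => ?_⟩
      have : K' y = X y := congrFun hres ⟨y, hy⟩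
      show K' y - X y = 0
      rw [this, sub_self]
    obtain ⟨K, hK, hKg⟩ := hT hg
    exact ⟨K, hK, hKg⟩
end
end

section
/- Let M be a smooth manifold and let 𝓕 be an admissible sheaf of local vector fields on M. If a connected open set U ⊆ M is 𝓕-special for all its points, then: (1) for every p ∈ U and every 𝔤_* ∈ 𝔊^𝓕_p there exists a unique K ∈ 𝓕(U) with germ_p(K) = 𝔤_*; and (2) for every connected open subset V ⊆ U and every K ∈ 𝓕(V) there exists a unique K̃ ∈ 𝓕(U) with K̃|_V = K. -/
open Set Manifold Topology

noncomputable section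

variable {E : Type*} [NormedAddCommGroup E] [NormedSpace ℝ E]
  {H : Type*} [TopologicalSpace H]

variable (I : ModelWithCorners ℝ E H) (M : Type*) [TopologicalSpace M] [ChartedSpace H M]
  [IsManifold I (⊤ : ℕ∞) M]

variable {I M}

/-- If the connected open set `U` is `𝓕`-special for all its points then
(1) every `𝓕`-germ at a point of `U` is the germ of a unique field of `𝓕(U)`, and
(2) every field of `𝓕(V)`, `V ⊆ U` connected open, extends uniquely to a field of `𝓕(U)`
(uniqueness of a local field on `U` meaning uniqueness of its values on `U`). -/
theorem statement8 [LocallyConnectedSpace M] (F : VFSheaf I M) (hF : F.Admissible)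
    (U : Set M) (hU : IsOpen U) (hUc : IsConnected U)
    (hsp : ∀ p ∈ U, IsSpecial F U p) :
    (∀ p ∈ U, ∀ g ∈ stalk F p,
      (∃ K ∈ F.carrier U, germAt I M p K = g) ∧
      (∀ K₁ ∈ F.carrier U, ∀ K₂ ∈ F.carrier U,
        germAt I M p K₁ = g → germAt I M p K₂ = g → ∀ x ∈ U, K₁ x = K₂ x)) ∧
    (∀ V : Set M, IsOpen V → IsConnected V → V ⊆ U → ∀ K ∈ F.carrier V,
      (∃ K' ∈ F.carrier U, ∀ x ∈ V, K' x = K x) ∧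
      (∀ K₁ ∈ F.carrier U, ∀ K₂ ∈ F.carrier U,
        (∀ x ∈ V, K₁ x = K x) → (∀ x ∈ V, K₂ x = K x) → ∀ x ∈ U, K₁ x = K₂ x)) := by
  obtain ⟨huc, -⟩ := hF
  constructor
  · intro p hp g hg
    obtain ⟨hUo, hUc', hpU, hinj, hsurj⟩ := hsp p hp
    refine ⟨hsurj g hg, ?_⟩
    intro K₁ h₁ K₂ h₂ hg₁ hg₂ x hx
    exact hinj K₁ h₁ K₂ h₂ (hg₁.trans hg₂.symm) x hx
  · intro V hVo hVc hVU K hK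
    obtain ⟨p, hpV⟩ := hVc.nonempty
    have hpU := hVU hpV
    obtain ⟨hUo', hUc', hpU', hinj, hsurj⟩ := hsp p hpU
    have hgstalk : germAt I M p K ∈ stalk F p :=
      Submodule.subset_span ⟨V, K, hVo, hVc, hpV, hK, rfl⟩
    obtain ⟨K', hK', hgerm⟩ := hsurj _ hgstalk
    have hdiff : K' - K ∈ germNull I M p := by
      rw [germAt, Submodule.mkQ_apply, Submodule.mkQ_apply] at hgerm
      exact (Submodule.Quotient.eq _).mp hgerm
    obtain ⟨W, hWo, hWc, hpW, hWz⟩ := hdiff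
    have hK'V : K' ∈ F.carrier V := F.restrict_mem U hU hUc V hVo hVc hVU K' hK'
    have hsub : K' - K ∈ F.carrier V := by
      have h := F.add_mem V hVo hVc K' hK'V ((-1 : ℝ) • K)
        (F.smul_mem V hVo hVc (-1) K hK)
      convert h using 1
      funext x
      show K' x - K x = K' x + (-1 : ℝ) • K x
      simp [sub_eq_add_neg]
    have hzero : ∀ x ∈ V, (K' - K) x = 0 := by
      apply huc V hVo hVc _ hsub
      exact ⟨connectedComponentIn (W ∩ V) p,
        ⟨p, mem_connectedComponentIn ⟨hpW, hpV⟩⟩,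
        (hWo.inter hVo).connectedComponentIn,
        (connectedComponentIn_subset _ _).trans inter_subset_right,
        fun x hx => hWz x (connectedComponentIn_subset _ _ hx).1⟩
    refine ⟨⟨K', hK', fun x hx => ?_⟩, ?_⟩
    · have h := hzero x hx
      have h2 : K' x - K x = 0 := h
      rwa [sub_eq_zero] at h2
    · intro K₁ h₁ K₂ h₂ e₁ e₂ x hx
      refine hinj K₁ h₁ K₂ h₂ ?_ x hx
      rw [germAt, Submodule.mkQ_apply, Submodule.mkQ_apply]
      refine (Submodule.Quotient.eq _).mpr ⟨V, hVo, hVc, hpV, fun y hy => ?_⟩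
      show K₁ y - K₂ y = 0
      rw [e₁ y hy, e₂ y hy, sub_self]
end
end

section
/- Let M be a smooth manifold and let 𝓕 be an admissible sheaf of local vector fields on M. Let γ : [a,b] → M be a continuous path and assume that κ^𝓕_{γ(t)} is constant for t ∈ [a,b]. Then, for every germ 𝔤_* ∈ 𝔊^𝓕_{γ(a)} there exists a unique transport [a,b] ∋ t ↦ 𝔤_t ∈ 𝔊^𝓕_{γ(t)} of 𝓕-germs along γ with 𝔤_a = 𝔤_*. -/
open Set Manifold Topology

noncomputable section

variable {E : Type*} [NormedAddCommGroup E] [NormedSpace ℝ E]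
  {H : Type*} [TopologicalSpace H]

variable (I : ModelWithCorners ℝ E H) (M : Type*) [TopologicalSpace M] [ChartedSpace H M]
  [IsManifold I (⊤ : ℕ∞) M]

variable {I M}

section Statement9Aux
set_option maxHeartbeats 2000000
set_option synthInstance.maxHeartbeats 400000
set_option linter.unusedSectionVars false

variable [LocallyConnectedSpace M] (F : VFSheaf I M)

private def carSub (U : Set M) (hU : IsOpen U) (hUc : IsConnected U) :
    Submodule ℝ ((x : U) → TangentSpace I (x : M)) where
  carrier := resVF I M U '' F.carrier U
  add_mem' := by
    rintro _ _ ⟨X, hX, rfl⟩ ⟨Y, hY, rfl⟩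
    exact ⟨X + Y, F.add_mem U hU hUc X hX Y hY, rfl⟩
  zero_mem' := ⟨0, F.zero_mem U hU hUc, rfl⟩
  smul_mem' := by
    rintro c _ ⟨X, hX, rfl⟩
    exact ⟨c • X, F.smul_mem U hU hUc c X hX, rfl⟩

private lemma span_eq_carSub {U : Set M} (hU : IsOpen U) (hUc : IsConnected U) :
    Submodule.span ℝ (resVF I M U '' F.carrier U) = carSub F U hU hUc := by
  have h : resVF I M U '' F.carrier U = ↑(carSub F U hU hUc) := rfl
  rw [h]
  exact Submodule.span_eq _

private lemma fdim_eq {U : Set M} (hU : IsOpen U) (hUc : IsConnected U) :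
    fdim F U = Module.rank ℝ (carSub F U hU hUc) := by
  rw [fdim, span_eq_carSub F hU hUc]

private def resMap (U W : Set M) (h : W ⊆ U) :
    ((x : U) → TangentSpace I (x : M)) →ₗ[ℝ] ((x : W) → TangentSpace I (x : M)) where
  toFun f := fun x => f ⟨x.1, h x.2⟩
  map_add' _ _ := rfl
  map_smul' _ _ := rfl

private lemma extend_lemma (hadm : F.Admissible) {U W : Set M}
    (hU : IsOpen U) (hUc : IsConnected U) (hW : IsOpen W) (hWc : IsConnected W)
    (hWU : W ⊆ U) (hdim : fdim F U ≤ fdim F W → fdim F W ≤ fdim F U) :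
    ∀ L ∈ F.carrier W, ∃ K ∈ F.carrier U, ∀ x ∈ W, K x = L x := by
  obtain ⟨hUC, N, hN⟩ := hadm
  have hmap : ∀ f ∈ carSub F U hU hUc, resMap U W hWU f ∈ carSub F W hW hWc := by
    rintro _ ⟨X, hX, rfl⟩
    exact ⟨X, F.restrict_mem U hU hUc W hW hWc hWU X hX, rfl⟩
  set φ : carSub F U hU hUc →ₗ[ℝ] carSub F W hW hWc :=
    (resMap U W hWU).restrict hmap with hφ
  have hinj : Function.Injective φ := by
    rw [← LinearMap.ker_eq_bot, eq_bot_iff]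
    rintro ⟨f, hf⟩ hker
    obtain ⟨X, hX, rfl⟩ := hf
    have hzero : ∀ x ∈ W, X x = 0 := by
      intro x hx
      have := congrFun (Subtype.ext_iff.mp hker) ⟨x, hx⟩
      exact this
    have hXzero : ∀ x ∈ U, X x = 0 :=
      hUC U hU hUc X hX ⟨W, hWc.nonempty, hW, hWU, hzero⟩
    refine Submodule.mem_bot _ |>.mpr ?_
    ext x
    exact hXzero x x.2
  have hle1 : fdim F U ≤ fdim F W := by
    rw [fdim_eq F hU hUc, fdim_eq F hW hWc]
    exact LinearMap.rank_le_of_injective φ hinj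
  have hrankeq : fdim F W = fdim F U := le_antisymm (hdim hle1) hle1
  have hfinU : Module.Finite ℝ (carSub F U hU hUc) := by
    rw [← Module.rank_lt_aleph0_iff, ← fdim_eq F hU hUc]
    exact (hN U hU hUc).trans_lt (Cardinal.nat_lt_aleph0 N)
  have hfinW : Module.Finite ℝ (carSub F W hW hWc) := by
    rw [← Module.rank_lt_aleph0_iff, ← fdim_eq F hW hWc]
    exact (hN W hW hWc).trans_lt (Cardinal.nat_lt_aleph0 N)
  have hfr : Module.finrank ℝ (carSub F U hU hUc) = Module.finrank ℝ (carSub F W hW hWc) := by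
    rw [Module.finrank, Module.finrank, ← fdim_eq F hU hUc, ← fdim_eq F hW hWc, hrankeq]
  have hsurj : Function.Surjective φ :=
    (LinearMap.injective_iff_surjective_of_finrank_eq_finrank hfr).mp hinj
  intro L hL
  obtain ⟨⟨f, hf⟩, hfeq⟩ := hsurj ⟨resVF I M W L, ⟨L, hL, rfl⟩⟩
  obtain ⟨K, hK, rfl⟩ := hf
  refine ⟨K, hK, fun x hx => ?_⟩
  exact congrFun (Subtype.ext_iff.mp hfeq) ⟨x, hx⟩

private lemma fdim_le_kappa (hbd : F.BoundedRank) {U : Set M} {p : M}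
    (hU : IsOpen U) (hUc : IsConnected U) (hp : p ∈ U) : fdim F U ≤ kappa F p := by
  obtain ⟨N, hN⟩ := hbd
  exact le_ciSup (f := fun V : {V : Set M // IsOpen V ∧ IsConnected V ∧ p ∈ V} => fdim F (V : Set M))
    ⟨(N : Cardinal), by rintro _ ⟨⟨V, hV⟩, rfl⟩; exact hN V hV.1 hV.2.1⟩ ⟨U, hU, hUc, hp⟩

private lemma exists_special_s9 (hbd : F.BoundedRank) (p : M) :
    ∃ U : Set M, IsOpen U ∧ IsConnected U ∧ p ∈ U ∧ fdim F U = kappa F p := by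
  obtain ⟨N, hN⟩ := hbd
  set S : Set ℕ :=
    {n | ∃ U : Set M, (IsOpen U ∧ IsConnected U ∧ p ∈ U) ∧ fdim F U = (n : Cardinal)} with hS
  have hfin : ∀ U : Set M, IsOpen U → IsConnected U →
      ((fdim F U).toNat : Cardinal) = fdim F U := fun U hU hUc =>
    Cardinal.cast_toNat_of_lt_aleph0 ((hN U hU hUc).trans_lt (Cardinal.nat_lt_aleph0 N))
  have hU₁ : IsOpen (connectedComponentIn univ p) := isOpen_univ.connectedComponentIn
  have hU₁c : IsConnected (connectedComponentIn univ p) :=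
    isConnected_connectedComponentIn_iff.mpr (mem_univ p)
  have hU₁p : p ∈ connectedComponentIn univ p := mem_connectedComponentIn (mem_univ p)
  have hne : S.Nonempty :=
    ⟨(fdim F (connectedComponentIn univ p)).toNat, connectedComponentIn univ p,
      ⟨hU₁, hU₁c, hU₁p⟩, (hfin _ hU₁ hU₁c).symm⟩
  have hbdd : BddAbove S := by
    refine ⟨N, ?_⟩
    rintro n ⟨U, hU, hn⟩
    have := hN U hU.1 hU.2.1
    rw [hn] at this
    exact_mod_cast this
  obtain ⟨U, hU, hUdim⟩ := Nat.sSup_mem hne hbdd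
  refine ⟨U, hU.1, hU.2.1, hU.2.2, le_antisymm (fdim_le_kappa F ⟨N, hN⟩ hU.1 hU.2.1 hU.2.2) ?_⟩
  haveI : Nonempty {V : Set M // IsOpen V ∧ IsConnected V ∧ p ∈ V} :=
    ⟨⟨connectedComponentIn univ p, hU₁, hU₁c, hU₁p⟩⟩
  refine ciSup_le ?_
  rintro ⟨V, hVo, hVc, hpV⟩
  have hmem : (fdim F V).toNat ∈ S := ⟨V, ⟨hVo, hVc, hpV⟩, (hfin V hVo hVc).symm⟩
  calc fdim F V = ((fdim F V).toNat : Cardinal) := (hfin V hVo hVc).symm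
    _ ≤ ((sSup S : ℕ) : Cardinal) := by exact_mod_cast le_csSup hbdd hmem
    _ = fdim F U := hUdim.symm

private lemma germAt_eq_of_eqOn {W : Set M} (hWo : IsOpen W) (hWc : IsConnected W) {q : M}
    (hq : q ∈ W) {K₁ K₂ : VF I M} (h : ∀ x ∈ W, K₁ x = K₂ x) :
    germAt I M q K₁ = germAt I M q K₂ := by
  refine (Submodule.Quotient.eq _).mpr ⟨W, hWo, hWc, hq, fun x hx => ?_⟩
  show K₁ x - K₂ x = 0
  rw [h x hx, sub_self]

private lemma eqOn_of_germAt_eq (hUC : F.UniqueContinuation) {W : Set M}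
    (hWo : IsOpen W) (hWc : IsConnected W) {q : M} (hq : q ∈ W) {K₁ K₂ : VF I M}
    (h₁ : K₁ ∈ F.carrier W) (h₂ : K₂ ∈ F.carrier W)
    (h : germAt I M q K₁ = germAt I M q K₂) : ∀ x ∈ W, K₁ x = K₂ x := by
  obtain ⟨V, hVo, hVc, hqV, hvan⟩ := (Submodule.Quotient.eq _).mp h
  have hmem : K₁ + (-1 : ℝ) • K₂ ∈ F.carrier W :=
    F.add_mem W hWo hWc K₁ h₁ _ (F.smul_mem W hWo hWc (-1) K₂ h₂)
  have hzero : ∀ x ∈ W, (K₁ + (-1 : ℝ) • K₂) x = 0 := by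
    refine hUC W hWo hWc _ hmem ⟨V ∩ W, ⟨q, hqV, hq⟩, hVo.inter hWo, inter_subset_right,
      fun x hx => ?_⟩
    show K₁ x + (-1 : ℝ) • K₂ x = 0
    rw [neg_one_smul, ← sub_eq_add_neg]
    exact hvan x hx.1
  intro x hx
  have := hzero x hx
  rw [show (K₁ + (-1 : ℝ) • K₂) x = K₁ x + -K₂ x by
    show K₁ x + (-1 : ℝ) • K₂ x = _; rw [neg_one_smul]] at this
  rwa [add_neg_eq_zero] at this

private lemma germAt_mem_stalk {V : Set M} (hVo : IsOpen V) (hVc : IsConnected V) {q : M}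
    (hq : q ∈ V) {X : VF I M} (hX : X ∈ F.carrier V) : germAt I M q X ∈ stalk F q :=
  Submodule.subset_span ⟨V, X, hVo, hVc, hq, hX, rfl⟩

private lemma germ_surj (hadm : F.Admissible) {U : Set M} {q : M}
    (hU : IsOpen U) (hUc : IsConnected U) (hq : q ∈ U) (hdim : kappa F q ≤ fdim F U) :
    ∀ g ∈ stalk F q, ∃ K ∈ F.carrier U, germAt I M q K = g := by
  set T : Submodule ℝ (GermSpace I M q) :=
    { carrier := germAt I M q '' F.carrier U
      add_mem' := by
        rintro _ _ ⟨X, hX, rfl⟩ ⟨Y, hY, rfl⟩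
        exact ⟨X + Y, F.add_mem U hU hUc X hX Y hY, map_add _ _ _⟩
      zero_mem' := ⟨0, F.zero_mem U hU hUc, map_zero _⟩
      smul_mem' := by
        rintro c _ ⟨X, hX, rfl⟩
        exact ⟨c • X, F.smul_mem U hU hUc c X hX, map_smul _ _ _⟩ } with hT
  have hsub : stalk F q ≤ T := by
    rw [stalk]
    refine Submodule.span_le.mpr ?_
    rintro _ ⟨V, X, hVo, hVc, hqV, hX, rfl⟩
    set W := connectedComponentIn (U ∩ V) q with hWdef
    have hqUV : q ∈ U ∩ V := ⟨hq, hqV⟩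
    have hWo : IsOpen W := (hU.inter hVo).connectedComponentIn
    have hWc : IsConnected W := isConnected_connectedComponentIn_iff.mpr hqUV
    have hqW : q ∈ W := mem_connectedComponentIn hqUV
    have hWU : W ⊆ U := (connectedComponentIn_subset _ _).trans inter_subset_left
    have hWV : W ⊆ V := (connectedComponentIn_subset _ _).trans inter_subset_right
    have hXW : X ∈ F.carrier W := F.restrict_mem V hVo hVc W hWo hWc hWV X hX
    obtain ⟨K, hK, hKX⟩ := extend_lemma F hadm hU hUc hWo hWc hWU
      (fun _ => (fdim_le_kappa F hadm.2 hWo hWc hqW).trans hdim) X hXW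
    exact ⟨K, hK, germAt_eq_of_eqOn hWo hWc hqW hKX⟩
  intro g hg
  exact hsub hg

private lemma image_mem_component {γ : ℝ → M} {s : Set ℝ} {A : Set M} {c : ℝ}
    (hs : IsPreconnected s) (hγ : ContinuousOn γ s) (hc : c ∈ s)
    (hsub : ∀ t ∈ s, γ t ∈ A) : ∀ t ∈ s, γ t ∈ connectedComponentIn A (γ c) := by
  intro t ht
  exact (hs.image γ hγ).subset_connectedComponentIn ⟨c, hc, rfl⟩
    (by rintro _ ⟨u, hu, rfl⟩; exact hsub u hu) ⟨t, ht, rfl⟩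

private lemma curve_nbhd {γ : ℝ → M} {a b c : ℝ} (hγ : ContinuousOn γ (Icc a b))
    (hc : c ∈ Icc a b) {U : Set M} (hU : IsOpen U) (hγc : γ c ∈ U) :
    ∃ ε > 0, ∀ t ∈ Ioo (c - ε) (c + ε) ∩ Icc a b, γ t ∈ U := by
  have hmem : γ ⁻¹' U ∈ 𝓝[Icc a b] c := hγ c hc (hU.mem_nhds hγc)
  rw [Metric.mem_nhdsWithin_iff] at hmem
  obtain ⟨ε, hε, hball⟩ := hmem
  refine ⟨ε, hε, fun t ht => hball ?_⟩
  rw [Real.ball_eq_Ioo]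
  exact ht

end Statement9Aux

set_option maxHeartbeats 2000000
set_option synthInstance.maxHeartbeats 400000
/-- Existence (and uniqueness) of transport along continuous paths on which
`κ^𝓕` is constant, for an admissible sheaf `𝓕`: every `𝓕`-germ at `γ a` admits a unique
transport of `𝓕`-germs along `γ` starting at it. -/
theorem statement9 [LocallyConnectedSpace M] (F : VFSheaf I M) (hF : F.Admissible)
    (a b : ℝ) (hab : a ≤ b) (γ : ℝ → M) (hγ : ContinuousOn γ (Icc a b))
    (hconst : ∀ t ∈ Icc a b, ∀ t' ∈ Icc a b, kappa F (γ t) = kappa F (γ t'))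
    (gstar : GermSpace I M (γ a)) (hgstar : gstar ∈ stalk F (γ a)) :
    ∃ g : (t : ℝ) → GermSpace I M (γ t), IsTransport F a b γ g ∧ g a = gstar ∧
      ∀ g' : (t : ℝ) → GermSpace I M (γ t), IsTransport F a b γ g' → g' a = gstar →
        ∀ t ∈ Icc a b, g' t = g t := by
  classical
  have haI : a ∈ Icc a b := ⟨le_refl a, hab⟩
  obtain ⟨U₀, hU₀o, hU₀c, hU₀p, hU₀d⟩ := exists_special_s9 F hF.2 (γ a)
  obtain ⟨K₀, hK₀, hK₀g⟩ := germ_surj F hF hU₀o hU₀c hU₀p (le_of_eq hU₀d.symm) gstar hgstar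
  set A : Set ℝ := {c | c ∈ Icc a b ∧ ∃ g : (t : ℝ) → GermSpace I M (γ t),
    IsTransport F a c γ g ∧ g a = gstar} with hA
  have haA : a ∈ A := by
    refine ⟨haI, fun t => germAt I M (γ t) K₀, ?_, hK₀g⟩
    intro t₀ ht₀
    refine ⟨1, one_pos, U₀, K₀, hU₀o, hU₀c, hK₀, ?_⟩
    intro t ht
    obtain rfl : t = a := le_antisymm ht.2.2 ht.2.1
    exact ⟨hU₀p, rfl⟩
  have hAne : A.Nonempty := ⟨a, haA⟩
  have hbdd : BddAbove A := ⟨b, fun c hc => hc.1.2⟩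
  set c₀ := sSup A with hc₀def
  have hac₀ : a ≤ c₀ := le_csSup hbdd haA
  have hc₀b : c₀ ≤ b := csSup_le hAne (fun c hc => hc.1.2)
  obtain ⟨U, hUo, hUc, hUp, hUdim⟩ := exists_special_s9 F hF.2 (γ c₀)
  obtain ⟨ε, hε, hball⟩ := curve_nbhd hγ ⟨hac₀, hc₀b⟩ hUo hUp
  obtain ⟨c, hcA, hcgt⟩ := exists_lt_of_lt_csSup hAne (by linarith : c₀ - ε < c₀)
  have hcle : c ≤ c₀ := le_csSup hbdd hcA
  obtain ⟨hcI, g, hgT, hga⟩ := hcA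
  obtain ⟨ε₁, hε₁, V', L', hV'o, hV'c, hL', hwit⟩ := hgT c ⟨hcI.1, le_refl c⟩
  have hcmem : c ∈ Ioo (c - ε₁) (c + ε₁) ∩ Icc a c :=
    ⟨⟨by linarith, by linarith⟩, hcI.1, le_refl c⟩
  have hγcV' : γ c ∈ V' := (hwit c hcmem).1
  have hgc : g c = germAt I M (γ c) L' := (hwit c hcmem).2
  have hγcU : γ c ∈ U := hball c ⟨⟨hcgt, by linarith⟩, hcI⟩
  have hstalk : g c ∈ stalk F (γ c) := by
    rw [hgc]; exact germAt_mem_stalk F hV'o hV'c hγcV' hL'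
  obtain ⟨K, hK, hKg⟩ := germ_surj F hF hUo hUc hγcU
    (by rw [← hconst c₀ ⟨hac₀, hc₀b⟩ c hcI]; exact le_of_eq hUdim.symm) (g c) hstalk
  set W := connectedComponentIn (U ∩ V') (γ c) with hWdef
  have hγcUV : γ c ∈ U ∩ V' := ⟨hγcU, hγcV'⟩
  have hWo : IsOpen W := (hUo.inter hV'o).connectedComponentIn
  have hWc : IsConnected W := isConnected_connectedComponentIn_iff.mpr hγcUV
  have hγcW : γ c ∈ W := mem_connectedComponentIn hγcUV
  have hKL' : ∀ x ∈ W, K x = L' x :=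
    eqOn_of_germAt_eq F hF.1 hWo hWc hγcW
      (F.restrict_mem U hUo hUc W hWo hWc
        ((connectedComponentIn_subset _ _).trans inter_subset_left) K hK)
      (F.restrict_mem V' hV'o hV'c W hWo hWc
        ((connectedComponentIn_subset _ _).trans inter_subset_right) L' hL')
      (by rw [hKg, hgc])
  set δ : ℝ := min ε₁ (min ε (c - (c₀ - ε))) with hδdef
  have hδε₁ : δ ≤ ε₁ := min_le_left _ _
  have hδε : δ ≤ ε := (min_le_right _ _).trans (min_le_left _ _)
  have hδc : δ ≤ c - (c₀ - ε) := (min_le_right _ _).trans (min_le_right _ _)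
  have hδ : 0 < δ := lt_min hε₁ (lt_min hε (by linarith))
  set J : Set ℝ := Ioo (c - δ) (c + δ) ∩ Icc a c with hJdef
  have hJsub : J ⊆ Icc a b := fun t ht => ⟨ht.2.1, ht.2.2.trans hcI.2⟩
  have hJpre : IsPreconnected J :=
    isPreconnected_iff_ordConnected.mpr (Set.ordConnected_Ioo.inter Set.ordConnected_Icc)
  have hJU : ∀ t ∈ J, γ t ∈ U ∩ V' := by
    intro t ht
    have h1 := ht.1.1
    have h2 := ht.1.2
    refine ⟨hball t ⟨⟨by linarith, by linarith⟩, hJsub ht⟩, ?_⟩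
    exact (hwit t ⟨⟨by linarith, by linarith⟩, ht.2⟩).1
  have hcJ : c ∈ J := ⟨⟨by linarith, by linarith⟩, hcI.1, le_refl c⟩
  have hJW : ∀ t ∈ J, γ t ∈ W :=
    image_mem_component hJpre (hγ.mono hJsub) hcJ hJU
  set c₁ : ℝ := min b (c₀ + ε / 2) with hc₁def
  have hc₁b : c₁ ≤ b := min_le_left _ _
  have hac₁ : a ≤ c₁ := le_min hab (by linarith)
  set g2 : (t : ℝ) → GermSpace I M (γ t) :=
    fun t => if t ≤ c then g t else germAt I M (γ t) K with hg2def
  have hc₁A : c₁ ∈ A := by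
    refine ⟨⟨hac₁, hc₁b⟩, g2, ?_, ?_⟩
    · intro t₀ ht₀
      rcases lt_trichotomy t₀ c with h | h | h
      · obtain ⟨ε₀, hε₀, V, L, hVo, hVc, hLmem, hwit₀⟩ := hgT t₀ ⟨ht₀.1, by linarith⟩
        refine ⟨min ε₀ (c - t₀), lt_min hε₀ (by linarith), V, L, hVo, hVc, hLmem, ?_⟩
        intro t ht
        have hm1 := min_le_left ε₀ (c - t₀)
        have hm2 := min_le_right ε₀ (c - t₀)
        have ha1 := ht.1.1
        have ha2 := ht.1.2
        have htc : t ≤ c := by linarith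
        have hres := hwit₀ t ⟨⟨by linarith, by linarith⟩, ht.2.1, htc⟩
        refine ⟨hres.1, ?_⟩
        show (if t ≤ c then g t else germAt I M (γ t) K) = _
        rw [if_pos htc]
        exact hres.2
      · rw [h]
        refine ⟨δ, hδ, U, K, hUo, hUc, hK, ?_⟩
        intro t ht
        have ha1 := ht.1.1
        have ha2 := ht.1.2
        by_cases htc : t ≤ c
        · have htJ : t ∈ J := ⟨ht.1, ht.2.1, htc⟩
          have hγtW := hJW t htJ
          refine ⟨(connectedComponentIn_subset _ _ hγtW).1, ?_⟩
          have hwt := hwit t ⟨⟨by linarith, by linarith⟩, ht.2.1, htc⟩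
          show (if t ≤ c then g t else germAt I M (γ t) K) = _
          rw [if_pos htc, hwt.2]
          exact germAt_eq_of_eqOn hWo hWc hγtW (fun x hx => (hKL' x hx).symm)
        · push_neg at htc
          refine ⟨hball t ⟨⟨by linarith, by linarith⟩, ht.2.1, ht.2.2.trans hc₁b⟩, ?_⟩
          show (if t ≤ c then g t else germAt I M (γ t) K) = _
          rw [if_neg (not_le.mpr htc)]
      · have ht₀c₁ : t₀ ≤ c₁ := ht₀.2
        have hc₁ε : c₁ ≤ c₀ + ε / 2 := min_le_right _ _
        refine ⟨min (t₀ - c) (c₀ + ε - t₀), lt_min (by linarith) (by linarith), U, K,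
          hUo, hUc, hK, ?_⟩
        intro t ht
        have hm1 := min_le_left (t₀ - c) (c₀ + ε - t₀)
        have hm2 := min_le_right (t₀ - c) (c₀ + ε - t₀)
        have ha1 := ht.1.1
        have ha2 := ht.1.2
        have htc : c < t := by linarith
        refine ⟨hball t ⟨⟨by linarith, by linarith⟩, ht.2.1, ht.2.2.trans hc₁b⟩, ?_⟩
        show (if t ≤ c then g t else germAt I M (γ t) K) = _
        rw [if_neg (not_le.mpr htc)]
    · show (if a ≤ c then g a else germAt I M (γ a) K) = gstar
      rw [if_pos hcI.1, hga]
  have hc₁le : c₁ ≤ c₀ := le_csSup hbdd hc₁A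
  have hbc₀ : b ≤ c₀ := by
    by_contra hcon
    push_neg at hcon
    have hlt : c₀ < c₁ := lt_min hcon (by linarith)
    linarith
  have hc₁eq : c₁ = b := by
    rw [hc₁def]; exact min_eq_left (by linarith)
  rw [hc₁eq] at hc₁A
  obtain ⟨-, gg, hggT, hgga⟩ := hc₁A
  refine ⟨gg, hggT, hgga, ?_⟩
  intro g' hg'T hg'a
  set B : Set ℝ := {d | d ∈ Icc a b ∧ ∀ s ∈ Icc a d, g' s = gg s} with hBdef
  have haB : a ∈ B := by
    refine ⟨haI, fun s hs => ?_⟩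
    obtain rfl : s = a := le_antisymm hs.2 hs.1
    rw [hg'a, hgga]
  have hBne : B.Nonempty := ⟨a, haB⟩
  have hBbdd : BddAbove B := ⟨b, fun d hd => hd.1.2⟩
  set d₀ := sSup B with hd₀def
  have had₀ : a ≤ d₀ := le_csSup hBbdd haB
  have hd₀b : d₀ ≤ b := csSup_le hBne (fun d hd => hd.1.2)
  obtain ⟨η₁, hη₁, P, Kp, hPo, hPc, hKp, hwP⟩ := hggT d₀ ⟨had₀, hd₀b⟩
  obtain ⟨η₂, hη₂, Q, Kq, hQo, hQc, hKq, hwQ⟩ := hg'T d₀ ⟨had₀, hd₀b⟩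
  set η := min η₁ η₂ with hηdef
  have hη₁' : η ≤ η₁ := min_le_left _ _
  have hη₂' : η ≤ η₂ := min_le_right _ _
  have hηpos : 0 < η := lt_min hη₁ hη₂
  obtain ⟨d, hdB, hdgt⟩ := exists_lt_of_lt_csSup hBne (by linarith : d₀ - η < d₀)
  have hdle : d ≤ d₀ := le_csSup hBbdd hdB
  set J' : Set ℝ := Ioo (d₀ - η) (d₀ + η) ∩ Icc a b with hJ'def
  have hdJ' : d ∈ J' := ⟨⟨hdgt, by linarith⟩, hdB.1⟩
  have hJ'P : ∀ t ∈ J', γ t ∈ P ∧ gg t = germAt I M (γ t) Kp := by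
    intro t ht
    have h1 := ht.1.1
    have h2 := ht.1.2
    exact hwP t ⟨⟨by linarith, by linarith⟩, ht.2⟩
  have hJ'Q : ∀ t ∈ J', γ t ∈ Q ∧ g' t = germAt I M (γ t) Kq := by
    intro t ht
    have h1 := ht.1.1
    have h2 := ht.1.2
    exact hwQ t ⟨⟨by linarith, by linarith⟩, ht.2⟩
  have hgerm : germAt I M (γ d) Kq = germAt I M (γ d) Kp := by
    rw [← (hJ'Q d hdJ').2, ← (hJ'P d hdJ').2]
    exact hdB.2 d ⟨hdB.1.1, le_refl d⟩
  set W' := connectedComponentIn (Q ∩ P) (γ d) with hW'def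
  have hγdQP : γ d ∈ Q ∩ P := ⟨(hJ'Q d hdJ').1, (hJ'P d hdJ').1⟩
  have hW'o : IsOpen W' := (hQo.inter hPo).connectedComponentIn
  have hW'c : IsConnected W' := isConnected_connectedComponentIn_iff.mpr hγdQP
  have hγdW' : γ d ∈ W' := mem_connectedComponentIn hγdQP
  have hKqp : ∀ x ∈ W', Kq x = Kp x :=
    eqOn_of_germAt_eq F hF.1 hW'o hW'c hγdW'
      (F.restrict_mem Q hQo hQc W' hW'o hW'c
        ((connectedComponentIn_subset _ _).trans inter_subset_left) Kq hKq)
      (F.restrict_mem P hPo hPc W' hW'o hW'c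
        ((connectedComponentIn_subset _ _).trans inter_subset_right) Kp hKp)
      hgerm
  have hJ'pre : IsPreconnected J' :=
    isPreconnected_iff_ordConnected.mpr (Set.ordConnected_Ioo.inter Set.ordConnected_Icc)
  have hJ'W : ∀ t ∈ J', γ t ∈ W' :=
    image_mem_component hJ'pre (hγ.mono inter_subset_right) hdJ'
      (fun t ht => ⟨(hJ'Q t ht).1, (hJ'P t ht).1⟩)
  set d₁ : ℝ := min b (d₀ + η / 2) with hd₁def
  have hd₁B : d₁ ∈ B := by
    refine ⟨⟨le_min hab (by linarith), min_le_left _ _⟩, ?_⟩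
    intro s hs
    rcases le_or_gt s d with h | h
    · exact hdB.2 s ⟨hs.1, h⟩
    · have hm := min_le_right b (d₀ + η / 2)
      have hs2 := hs.2
      have hsJ' : s ∈ J' := ⟨⟨by linarith, by linarith⟩, hs.1, hs.2.trans (min_le_left _ _)⟩
      rw [(hJ'Q s hsJ').2, (hJ'P s hsJ').2]
      exact germAt_eq_of_eqOn hW'o hW'c (hJ'W s hsJ') hKqp
  have hd₁le : d₁ ≤ d₀ := le_csSup hBbdd hd₁B
  have hbd₀ : b ≤ d₀ := by
    by_contra hcon
    push_neg at hcon
    have hlt : d₀ < d₁ := lt_min hcon (by linarith)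
    linarith
  intro t ht
  refine hd₁B.2 t ⟨ht.1, ?_⟩
  have hd₁eq : d₁ = b := min_eq_left (by linarith)
  rw [hd₁eq]
  exact ht.2
end
end

section
/- Let M be a real-analytic manifold and let 𝓕 be an analytically determined real-analytic sheaf of local vector fields on M. Let U ⊆ M be a connected open set, let V ⊆ U be a non-empty connected open subset, and let X ∈ 𝔛^ω(U) be a real-analytic vector field on U. If X|_V belongs to 𝓕(V), then X belongs to 𝓕(U). -/
open Set Manifold Topology

noncomputable section

variable {E : Type*} [NormedAddCommGroup E] [NormedSpace ℝ E]
  {H : Type*} [TopologicalSpace H]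

variable (I : ModelWithCorners ℝ E H) (M : Type*) [TopologicalSpace M] [ChartedSpace H M]
  [IsManifold I ((⊤ : ℕ∞) : WithTop ℕ∞) M]

variable {I M}

section Analytic

variable {E₁ : Type*} [NormedAddCommGroup E₁] [NormedSpace ℝ E₁]
  {H₁ : Type*} [TopologicalSpace H₁]
  {E₂ : Type*} [NormedAddCommGroup E₂] [NormedSpace ℝ E₂]
  {H₂ : Type*} [TopologicalSpace H₂]

variable (I₁ : ModelWithCorners ℝ E₁ H₁) (I₂ : ModelWithCorners ℝ E₂ H₂)

/-- Real-analyticity, on a set `U`, of a map between charted spaces: around every point of `U`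
the map, read in the preferred extended charts, is real-analytic (within the chart image
of `U`). -/
def MAnalyticOn {M₁ : Type*} [TopologicalSpace M₁] [ChartedSpace H₁ M₁]
    {M₂ : Type*} [TopologicalSpace M₂] [ChartedSpace H₂ M₂]
    (f : M₁ → M₂) (U : Set M₁) : Prop :=
  ∀ x ∈ U, AnalyticWithinAt ℝ (writtenInExtChartAt I₁ I₂ x f)
    ((extChartAt I₁ x).symm ⁻¹' U ∩ Set.range I₁) (extChartAt I₁ x x)

variable {I₁} in
/-- A real-analytic vector field on `U ⊆ M`: the associated section of the tangent bundle is
real-analytic on `U`. -/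
def AnalyticVFOn {M₁ : Type*} [TopologicalSpace M₁] [ChartedSpace H₁ M₁]
    [IsManifold I₁ ((⊤ : ℕ∞) : WithTop ℕ∞) M₁] (X : VF I₁ M₁) (U : Set M₁) : Prop :=
  MAnalyticOn I₁ I₁.tangent (fun x => (⟨x, X x⟩ : TangentBundle I₁ M₁)) U

end Analytic

section AnalyticallyDetermined

variable [IsManifold I ((⊤ : ℕ∞) : WithTop ℕ∞) M]

/-- A sheaf of local vector fields is real-analytic if all its local fields are real-analytic
vector fields. -/
def VFSheaf.RealAnalytic (F : VFSheaf I M) : Prop :=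
  ∀ U : Set M, IsOpen U → IsConnected U → ∀ X ∈ F.carrier U, AnalyticVFOn X U

/-- A real-analytic sheaf `𝓕` is analytically determined if for every open set `U` there is a
collection `𝓐 U` of maps sending real-analytic vector fields on `U` to real-analytic functions
`U → ℝ` (depending only on the values of the field on `U`), such that (a) the restriction to an
open subset `V ⊆ U` of `Fn X`, `Fn ∈ 𝓐 U`, is realized by some member of `𝓐 V`, and (b) a
real-analytic vector field `X` on a connected open set `U` belongs to `𝓕(U)` if and only if
`Fn X` vanishes identically on `U` for all `Fn ∈ 𝓐 U`. -/
def VFSheaf.AnalyticallyDetermined (F : VFSheaf I M) : Prop :=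
  ∃ 𝓐 : Set M → Set (VF I M → M → ℝ),
    (∀ U : Set M, IsOpen U → ∀ Fn ∈ 𝓐 U, ∀ X : VF I M, AnalyticVFOn X U →
      MAnalyticOn I (𝓘(ℝ, ℝ)) (Fn X) U ∧
      ∀ Y : VF I M, AnalyticVFOn Y U → (∀ x ∈ U, X x = Y x) → ∀ x ∈ U, Fn X x = Fn Y x) ∧
    (∀ U V : Set M, IsOpen U → IsOpen V → V ⊆ U → ∀ Fn ∈ 𝓐 U,
      ∀ X : VF I M, AnalyticVFOn X U → ∃ Gn ∈ 𝓐 V, ∀ x ∈ V, Fn X x = Gn X x) ∧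
    (∀ U : Set M, IsOpen U → IsConnected U → ∀ X : VF I M, AnalyticVFOn X U →
      (X ∈ F.carrier U ↔ ∀ Fn ∈ 𝓐 U, ∀ x ∈ U, Fn X x = 0))

end AnalyticallyDetermined

/-- For an analytically determined real-analytic sheaf `𝓕` on a
real-analytic manifold `M`: if a real-analytic vector field `X` on a connected open set `U`
restricts on some non-empty connected open subset `V ⊆ U` to a field of `𝓕(V)`, then
`X ∈ 𝓕(U)`. -/
theorem statement12 [IsManifold I (⊤ : WithTop ℕ∞) M] (F : VFSheaf I M)
    (hra : F.RealAnalytic) (had : F.AnalyticallyDetermined)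
    (U : Set M) (hU : IsOpen U) (hUc : IsConnected U)
    (V : Set M) (hV : IsOpen V) (hVc : IsConnected V) (hVne : V.Nonempty) (hVU : V ⊆ U)
    (X : VF I M) (hX : AnalyticVFOn X U) (hXV : X ∈ F.carrier V) :
    X ∈ F.carrier U := by
  obtain ⟨𝓐, h1, h2, h3⟩ := had
  -- `X` is analytic on `V` as well
  have hXanV : AnalyticVFOn X V := fun x hx =>
    (hX x (hVU hx)).mono (inter_subset_inter_left _ (preimage_mono hVU))
  refine (h3 U hU hUc X hX).mpr ?_
  intro Fn hFn
  -- The function `f = Fn X` is analytic on `U` and vanishes on `V`.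
  set f : M → ℝ := Fn X with hf_def
  have hfan : MAnalyticOn I (𝓘(ℝ, ℝ)) f U := (h1 U hU Fn hFn X hX).1
  obtain ⟨Gn, hGnA, hGnEq⟩ := h2 U V hU hV hVU Fn hFn X hX
  have hGn0 : ∀ x ∈ V, Gn X x = 0 := (h3 V hV hVc X hXanV).mp hXV Gn hGnA
  have hfV : ∀ x ∈ V, f x = 0 := fun x hx => (hGnEq x hx).trans (hGn0 x hx)
  -- The set of points near which `f` vanishes (relative to `U`).
  set S : Set M := {x | ∃ W : Set M, IsOpen W ∧ x ∈ W ∧ ∀ y ∈ W ∩ U, f y = 0} with hS_def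
  have hSopen : IsOpen S := by
    refine isOpen_iff_forall_mem_open.mpr ?_
    rintro x ⟨W, hWo, hxW, hWf⟩
    exact ⟨W, fun y hy => ⟨W, hWo, hy, hWf⟩, hWo, hxW⟩
  have hVS : V ⊆ S := fun x hx => ⟨V, hV, hx, fun y hy => hfV y hy.1⟩
  -- Closedness of `S` in `U`, via the identity theorem in a chart.
  have hclosed : closure S ∩ U ⊆ S := by
    rintro x ⟨hxc, hxU⟩
    set e := extChartAt I x with he_def
    set z₀ := e x with hz₀_def
    set s : Set E := e.symm ⁻¹' U ∩ Set.range I with hs_def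
    have hA : AnalyticWithinAt ℝ (writtenInExtChartAt I (𝓘(ℝ, ℝ)) x f) s z₀ := hfan x hxU
    have hwr : writtenInExtChartAt I (𝓘(ℝ, ℝ)) x f = fun z => f (e.symm z) := by
      ext z
      simp [writtenInExtChartAt, extChartAt_model_space_eq_id, he_def, extChartAt_coe_symm, chartAt_self_eq]
    rw [hwr] at hA
    obtain ⟨g, -, hgEq, hgA⟩ := hA.exists_analyticAt
    obtain ⟨r, hr, hr'⟩ := Metric.eventually_nhds_iff_ball.mp hgA.eventually_analyticAt
    -- pick a point `y` of `S` near `x`, inside the chart and with `e y` in the ball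
    have hNopen : IsOpen (e.source ∩ e ⁻¹' Metric.ball z₀ r) :=
      (continuousOn_extChartAt x).isOpen_inter_preimage (isOpen_extChartAt_source x)
        Metric.isOpen_ball
    have hxN : x ∈ e.source ∩ e ⁻¹' Metric.ball z₀ r :=
      ⟨mem_extChartAt_source x, by exact Metric.mem_ball_self hr⟩
    obtain ⟨y, hyN', hyS⟩ := mem_closure_iff.mp hxc _ (hNopen.inter hU) ⟨hxN, hxU⟩
    obtain ⟨hyN, hyU⟩ := hyN'
    obtain ⟨W, hWo, hyW, hWf⟩ := hyS
    set c := chartAt H x with hc_def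
    have hyc : y ∈ c.source := by
      have := hyN.1; rwa [he_def, extChartAt_source] at this
    -- an open set in `E` on which the pulled-back `f` vanishes
    set OH : Set H := c.target ∩ c.symm ⁻¹' (W ∩ U) with hOH_def
    have hOHopen : IsOpen OH :=
      c.symm.continuousOn.isOpen_inter_preimage c.open_target (hWo.inter hU)
    set A : Set E := Metric.ball z₀ r ∩ I.symm ⁻¹' OH with hA_def
    have hAopen : IsOpen A := Metric.isOpen_ball.inter (hOHopen.preimage I.continuous_symm)
    have heyA : e y ∈ A := by
      refine ⟨hyN.2, ?_⟩
      have hey : e y = I (c y) := by rw [he_def, extChartAt_coe]; rfl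
      have : I.symm (e y) = c y := by rw [hey, I.left_inv]
      simp only [mem_preimage, this, hOH_def]
      exact ⟨c.map_source hyc, by rw [mem_preimage, c.left_inv hyc]; exact ⟨hyW, hyU⟩⟩
    -- `g` vanishes on `A ∩ range I`
    have hg0 : ∀ z ∈ A ∩ Set.range I, g z = 0 := by
      rintro z ⟨⟨hzball, hzOH⟩, hzrange⟩
      have hIz : I.symm z ∈ OH := hzOH
      have hesz : e.symm z = c.symm (I.symm z) := by rw [he_def, extChartAt_coe_symm]; rfl
      have hzWU : e.symm z ∈ W ∩ U := by rw [hesz]; exact hIz.2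
      have hzs : z ∈ s := ⟨hzWU.2, hzrange⟩
      have := hgEq (mem_insert_of_mem _ hzs)
      rw [← this]
      exact hWf _ hzWU
    -- find a point of the interior of `range I` inside `A`
    have heyrange : e y ∈ Set.range I := by
      have hey : e y = I (c y) := by rw [he_def, extChartAt_coe]; rfl
      exact hey ▸ mem_range_self _
    obtain ⟨w, hwA, hwInt⟩ :=
      mem_closure_iff.mp (I.range_subset_closure_interior heyrange) A hAopen heyA
    have hwball : w ∈ Metric.ball z₀ r := hwA.1
    have hg_ev : g =ᶠ[𝓝 w] 0 := by
      filter_upwards [(hAopen.inter isOpen_interior).mem_nhds ⟨hwA, hwInt⟩] with z hz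
      exact hg0 z ⟨hz.1, interior_subset hz.2⟩
    have hball : AnalyticOnNhd ℝ g (Metric.ball z₀ r) := fun z hz => hr' z hz
    have hgzero : EqOn g 0 (Metric.ball z₀ r) :=
      hball.eqOn_zero_of_preconnected_of_eventuallyEq_zero
        (convex_ball z₀ r).isPreconnected hwball hg_ev
    -- conclude `x ∈ S`
    refine ⟨e.source ∩ e ⁻¹' Metric.ball z₀ r, hNopen, hxN, ?_⟩
    rintro m ⟨⟨hms, hmb⟩, hmU⟩
    have hems : e m ∈ s := ⟨by rw [mem_preimage, e.left_inv hms]; exact hmU, by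
      rw [he_def, extChartAt_coe]; exact mem_range_self _⟩
    have h1' : f m = g (e m) := by
      have := hgEq (mem_insert_of_mem _ hems)
      simpa [e.left_inv hms] using this
    rw [h1', hgzero hmb]; rfl
  -- connectedness argument
  have hUS : U ⊆ S := by
    obtain ⟨v, hv⟩ := hVne
    exact hUc.isPreconnected.subset_of_closure_inter_subset hSopen
      ⟨v, hVU hv, hVS hv⟩ hclosed
  intro x hxU
  obtain ⟨W, hWo, hxW, hWf⟩ := hUS hxU
  exact hWf x ⟨hxW, hxU⟩
end
end
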